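/- arXiv:1805.10843 — 4 statements merged into one kernel-verified Lean document; each statement's English description precedes it below -/
import Mathlib

section
/- For every μ ∈ (0,1) and every σ² > 0, the simplex density integrates to one over the unit interval: ∫₀¹ (2πσ²(y(1−y))³)^{−1/2} · exp(−d(y;μ)/(2σ²)) dy = 1. -/
open Real MeasureTheory
open Filter Set Topology intervalIntegral

/-- The unit deviance of the simplex distribution. -/
noncomputable def simplexDev (y μ : ℝ) : ℝ :=
  (y - μ)^2 / (y * (1 - y) * μ^2 * (1 - μ)^2)

/-- The simplex density. -/
noncomputable def simplexPdf (y μ σ2 : ℝ) : ℝ :=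
  (2 * Real.pi * σ2 * (y * (1 - y))^3) ^ (-(1/2) : ℝ) *
    Real.exp (-(simplexDev y μ) / (2 * σ2))

noncomputable def simF (σ2 t : ℝ) : ℝ := ∫ s in (0:ℝ)..t, Real.exp (-(s^2) / (2*σ2))

lemma simF_hasDerivAt (σ2 t : ℝ) :
    HasDerivAt (simF σ2) (Real.exp (-(t^2) / (2*σ2))) t := by
  have hc : Continuous fun s : ℝ => Real.exp (-(s^2) / (2*σ2)) := by continuity
  exact (hc.integral_hasStrictDerivAt 0 t).hasDerivAt

lemma simGauss_integrable {σ2 : ℝ} (hσ2 : 0 < σ2) :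
    Integrable (fun s : ℝ => Real.exp (-(s^2) / (2*σ2))) := by
  have key : ∀ s : ℝ, -(s^2)/(2*σ2) = -(2*σ2)⁻¹ * s^2 := fun s => by ring
  simp_rw [key]
  exact integrable_exp_neg_mul_sq (by positivity)

lemma simGauss_Iic_eq_Ioi {σ2 : ℝ} :
    (∫ s in Set.Iic (0:ℝ), Real.exp (-(s^2) / (2*σ2)))
      = ∫ s in Set.Ioi (0:ℝ), Real.exp (-(s^2) / (2*σ2)) := by
  have h := integral_comp_neg_Ioi (0:ℝ) (fun s => Real.exp (-(s^2)/(2*σ2)))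
  simp only [neg_zero, neg_sq] at h
  rw [← h]

lemma simF_tendsto_atTop {σ2 : ℝ} (hσ2 : 0 < σ2) :
    Tendsto (simF σ2) atTop (𝓝 (∫ s in Set.Ioi (0:ℝ), Real.exp (-(s^2) / (2*σ2)))) :=
  intervalIntegral_tendsto_integral_Ioi 0 (simGauss_integrable hσ2).integrableOn tendsto_id

lemma simF_tendsto_atBot {σ2 : ℝ} (hσ2 : 0 < σ2) :
    Tendsto (simF σ2) atBot (𝓝 (-∫ s in Set.Ioi (0:ℝ), Real.exp (-(s^2) / (2*σ2)))) := by
  have h1 : Tendsto (fun t => ∫ s in t..(0:ℝ), Real.exp (-(s^2) / (2*σ2))) atBot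
      (𝓝 (∫ s in Set.Iic (0:ℝ), Real.exp (-(s^2) / (2*σ2)))) :=
    intervalIntegral_tendsto_integral_Iic 0 (simGauss_integrable hσ2).integrableOn tendsto_id
  have h3 := h1.neg
  rw [simGauss_Iic_eq_Ioi] at h3
  refine h3.congr fun t => ?_
  rw [simF, intervalIntegral.integral_symm, neg_neg]

lemma simF_two_integral {σ2 : ℝ} (hσ2 : 0 < σ2) :
    2 * (∫ s in Set.Ioi (0:ℝ), Real.exp (-(s^2) / (2*σ2))) = Real.sqrt (2*π*σ2) := by
  have htot : (∫ s : ℝ, Real.exp (-(s^2) / (2*σ2))) = Real.sqrt (2*π*σ2) := by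
    have h := integral_gaussian ((2*σ2)⁻¹)
    have he : (fun x : ℝ => Real.exp (-(2*σ2)⁻¹ * x^2)) = fun x : ℝ => Real.exp (-(x^2)/(2*σ2)) := by
      funext x; congr 1; ring
    rw [he] at h
    rw [h]
    congr 1
    rw [inv_eq_one_div, div_div_eq_mul_div]; ring
  have hsplit := integral_Iic_add_Ioi (μ := volume) (b := (0:ℝ))
    ((simGauss_integrable hσ2).integrableOn) ((simGauss_integrable hσ2).integrableOn)
  rw [← htot, ← hsplit, simGauss_Iic_eq_Ioi]; ring

lemma simplexPdf_eq_sqrt {μ σ2 y : ℝ} (hσ2 : 0 < σ2) (hy0 : 0 < y) (hy1 : y < 1) :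
    simplexPdf y μ σ2 = (Real.sqrt (2*π*σ2))⁻¹ *
      (Real.exp (-(simplexDev y μ)/(2*σ2)) / (Real.sqrt (y*(1-y)))^3) := by
  have ht : 0 < y*(1-y) := by nlinarith
  have h2 : (0:ℝ) < 2*π*σ2 := by positivity
  have hcube : ((y*(1-y))^3 : ℝ) ^ (-(1/2) : ℝ) = ((Real.sqrt (y*(1-y)))^3)⁻¹ := by
    rw [← Real.rpow_natCast (y*(1-y)) 3, ← Real.rpow_mul ht.le,
      Real.sqrt_eq_rpow, ← Real.rpow_natCast ((y*(1-y)) ^ ((1:ℝ)/2)) 3,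
      ← Real.rpow_mul ht.le, ← Real.rpow_neg ht.le]
    norm_num
  unfold simplexPdf
  rw [Real.mul_rpow h2.le (by positivity), hcube, Real.rpow_neg h2.le, ← Real.sqrt_eq_rpow]
  ring

lemma simplexDev_deriv_aux {μ σ2 : ℝ} (hμ0 : 0 < μ) (hμ1 : μ < 1) (hσ2 : 0 < σ2)
    {y : ℝ} (hy0 : 0 < y) (hy1 : y < 1) :
    HasDerivAt (fun y => (Real.sqrt (2*π*σ2))⁻¹ *
      (simF σ2 ((y-μ)/((μ*(1-μ)) * Real.sqrt (y*(1-y))))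
        - (1-2*μ) * Real.exp (2/((μ*(1-μ))*σ2)) *
          simF σ2 ((y+μ-2*μ*y)/((μ*(1-μ)) * Real.sqrt (y*(1-y))))))
      (simplexPdf y μ σ2) y := by
  have ht : 0 < y*(1-y) := by nlinarith
  obtain ⟨s, hsdef⟩ : ∃ t, Real.sqrt (y*(1-y)) = t := ⟨_, rfl⟩
  have hs : 0 < s := hsdef ▸ Real.sqrt_pos.2 ht
  have hs2 : s ^ 2 = y*(1-y) := by rw [← hsdef]; exact Real.sq_sqrt ht.le
  have hc : 0 < μ*(1-μ) := by nlinarith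
  have hprod : HasDerivAt (fun y : ℝ => y*(1-y)) (1-2*y) y := by
    have := (hasDerivAt_id y).mul ((hasDerivAt_const y (1:ℝ)).sub (hasDerivAt_id y))
    refine this.congr_deriv (Eq.symm ?_)
    simp only [id_eq, Pi.sub_apply]; ring
  have hsqrt : HasDerivAt (fun y : ℝ => Real.sqrt (y*(1-y))) ((1-2*y)/(2*s)) y := by
    rw [← hsdef]; exact hprod.sqrt ht.ne'
  have hden : HasDerivAt (fun y : ℝ => (μ*(1-μ)) * Real.sqrt (y*(1-y)))
      ((μ*(1-μ)) * ((1-2*y)/(2*s))) y := hsqrt.const_mul _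
  have hden0 : (μ*(1-μ)) * Real.sqrt (y*(1-y)) ≠ 0 := by
    rw [hsdef]; positivity
  -- derivative of g
  have hg : HasDerivAt (fun y => (y - μ)/((μ*(1-μ)) * Real.sqrt (y*(1-y))))
      ((y + μ - 2*μ*y)/(2*(μ*(1-μ))*s^3)) y := by
    have h := ((hasDerivAt_id y).sub_const μ).div hden hden0
    rw [hsdef] at h
    refine h.congr_deriv (Eq.symm ?_)
    have hμ' : (1:ℝ) - μ ≠ 0 := by linarith
    simp only [id_eq]
    field_simp
    linear_combination (-2) * hs2
  -- derivative of k
  have hk : HasDerivAt (fun y => (y + μ - 2*μ*y)/((μ*(1-μ)) * Real.sqrt (y*(1-y))))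
      ((y - μ)/(2*(μ*(1-μ))*s^3)) y := by
    have hnum : HasDerivAt (fun y : ℝ => y + μ - 2*μ*y) (1-2*μ) y := by
      have := ((hasDerivAt_id y).add_const μ).sub ((hasDerivAt_id y).const_mul (2*μ))
      refine this.congr_deriv (Eq.symm ?_)
      try simp only [id_eq]
      ring
    have h := hnum.div hden hden0
    rw [hsdef] at h
    refine h.congr_deriv (Eq.symm ?_)
    have hμ' : (1:ℝ) - μ ≠ 0 := by linarith
    field_simp
    linear_combination (-2*(1-2*μ)) * hs2
  have hFg := (simF_hasDerivAt σ2 ((y-μ)/((μ*(1-μ)) * Real.sqrt (y*(1-y))))).comp y hg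
  have hFk := (simF_hasDerivAt σ2 ((y+μ-2*μ*y)/((μ*(1-μ)) * Real.sqrt (y*(1-y))))).comp y hk
  have hmain := ((hFg.sub (hFk.const_mul ((1-2*μ) * Real.exp (2/((μ*(1-μ))*σ2))))).const_mul
    ((Real.sqrt (2*π*σ2))⁻¹))
  rw [hsdef] at hmain
  refine hmain.congr_deriv (Eq.symm ?_)
  rw [simplexPdf_eq_sqrt hσ2 hy0 hy1, hsdef]
  have hgy2 : ((y - μ)/((μ*(1-μ)) * s))^2 = simplexDev y μ := by
    rw [div_pow, mul_pow, hs2, simplexDev]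
    rw [show y*(1-y)*μ^2*(1-μ)^2 = (μ*(1-μ))^2*(y*(1-y)) by ring]
  have hky2 : ((y + μ - 2*μ*y)/((μ*(1-μ)) * s))^2 = simplexDev y μ + 4/(μ*(1-μ)) := by
    rw [← hgy2, div_pow, div_pow, mul_pow, hs2]
    rw [div_add_div _ _ (by positivity) hc.ne', div_eq_div_iff (by positivity) (by positivity)]
    ring
  have hexpk : Real.exp (2/((μ*(1-μ))*σ2)) * Real.exp (-(((y + μ - 2*μ*y)/((μ*(1-μ)) * s))^2)/(2*σ2))
      = Real.exp (-(simplexDev y μ)/(2*σ2)) := by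
    rw [← Real.exp_add, hky2]
    congr 1
    field_simp
    ring
  rw [hgy2, ← hexpk]
  have hμ' : (1:ℝ) - μ ≠ 0 := by linarith
  field_simp
  ring

lemma exp_neg_le_cube {x : ℝ} (hx : 0 < x) : Real.exp (-x) ≤ 27 / x^3 := by
  have h1 : x/3 + 1 ≤ Real.exp (x/3) := Real.add_one_le_exp _
  have h2 : x^3/27 ≤ Real.exp x := by
    calc x^3/27 = (x/3)^3 := by ring
    _ ≤ (x/3+1)^3 := by nlinarith
    _ ≤ (Real.exp (x/3))^3 := by
        apply pow_le_pow_left₀ (by positivity) h1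
    _ = Real.exp x := by
        rw [← Real.exp_nat_mul]
        congr 1
        push_cast
        ring
  rw [Real.exp_neg, inv_le_comm₀ (Real.exp_pos x) (by positivity)]
  calc (27/x^3)⁻¹ = x^3/27 := by rw [inv_div]
  _ ≤ Real.exp x := h2

lemma simplexPdf_le {μ σ2 : ℝ} (hμ0 : 0 < μ) (hμ1 : μ < 1) (hσ2 : 0 < σ2) {δ y : ℝ}
    (hδ : 0 < δ) (hy0 : 0 < y) (hy1 : y < 1) (hyd : δ ≤ |y - μ|) :
    simplexPdf y μ σ2 ≤ (Real.sqrt (2*π*σ2))⁻¹ * 27 * (2*σ2*(μ*(1-μ))^2/δ^2)^3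
      * (Real.sqrt (y*(1-y)))^3 := by
  have ht : 0 < y*(1-y) := by nlinarith
  have hc : 0 < μ*(1-μ) := by nlinarith
  obtain ⟨s, hsdef⟩ : ∃ t, Real.sqrt (y*(1-y)) = t := ⟨_, rfl⟩
  have hs : 0 < s := hsdef ▸ Real.sqrt_pos.2 ht
  have hs2 : s ^ 2 = y*(1-y) := by rw [← hsdef]; exact Real.sq_sqrt ht.le
  have hδ2 : δ^2 ≤ (y - μ)^2 := by
    calc δ^2 ≤ |y-μ|^2 := by apply pow_le_pow_left₀ hδ.le hyd
    _ = (y-μ)^2 := sq_abs _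
  have hx : 0 < δ^2/(2*σ2*(μ*(1-μ))^2*(y*(1-y))) := by positivity
  have hxle : δ^2/(2*σ2*(μ*(1-μ))^2*(y*(1-y))) ≤ simplexDev y μ/(2*σ2) := by
    rw [simplexDev, div_div]
    have hd : 0 < y*(1-y)*μ^2*(1-μ)^2*(2*σ2) := by
      have h1 : (0:ℝ) < 1 - μ := by linarith
      exact mul_pos (mul_pos (mul_pos ht (pow_pos hμ0 2)) (pow_pos h1 2)) (by positivity)
    exact div_le_div₀ (sq_nonneg _) hδ2 hd (le_of_eq (by ring))
  have hexp : Real.exp (-(simplexDev y μ)/(2*σ2))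
      ≤ 27/(δ^2/(2*σ2*(μ*(1-μ))^2*(y*(1-y))))^3 := by
    calc Real.exp (-(simplexDev y μ)/(2*σ2))
        ≤ Real.exp (-(δ^2/(2*σ2*(μ*(1-μ))^2*(y*(1-y))))) := by
          rw [Real.exp_le_exp, neg_div]
          exact neg_le_neg hxle
    _ ≤ _ := exp_neg_le_cube hx
  rw [simplexPdf_eq_sqrt hσ2 hy0 hy1, hsdef]
  calc (Real.sqrt (2*π*σ2))⁻¹ * (Real.exp (-(simplexDev y μ)/(2*σ2)) / s^3)
      ≤ (Real.sqrt (2*π*σ2))⁻¹ * ((27/(δ^2/(2*σ2*(μ*(1-μ))^2*(y*(1-y))))^3) / s^3) := by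
        gcongr
  _ = (Real.sqrt (2*π*σ2))⁻¹ * 27 * (2*σ2*(μ*(1-μ))^2/δ^2)^3 * s^3 := by
        rw [← hs2]
        field_simp

lemma simplexPdf_zero (μ σ2 : ℝ) : simplexPdf 0 μ σ2 = 0 := by
  unfold simplexPdf
  norm_num

lemma simplexPdf_one (μ σ2 : ℝ) : simplexPdf 1 μ σ2 = 0 := by
  unfold simplexPdf
  norm_num

lemma simplexPdf_nonneg {μ σ2 y : ℝ} (hσ2 : 0 < σ2) (hy0 : 0 ≤ y) (hy1 : y ≤ 1) :
    0 ≤ simplexPdf y μ σ2 := by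
  have ht : 0 ≤ y*(1-y) := mul_nonneg hy0 (by linarith)
  have hb : 0 ≤ 2*π*σ2*(y*(1-y))^3 := by
    apply mul_nonneg (by positivity) (pow_nonneg ht 3)
  exact mul_nonneg (Real.rpow_nonneg hb _) (Real.exp_pos _).le

lemma simplexPdf_continuousOn {μ σ2 : ℝ} (hμ0 : 0 < μ) (hμ1 : μ < 1) (hσ2 : 0 < σ2) :
    ContinuousOn (fun y => simplexPdf y μ σ2) (Set.Icc 0 1) := by
  intro y hy
  rcases eq_or_lt_of_le hy.1 with h0 | h0
  · -- y = 0
    rw [ContinuousWithinAt, ← h0, simplexPdf_zero]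
    apply squeeze_zero' (g := fun z : ℝ =>
      (Real.sqrt (2*π*σ2))⁻¹ * 27 * (2*σ2*(μ*(1-μ))^2/(μ/2)^2)^3 * (Real.sqrt (z*(1-z)))^3)
    · filter_upwards [self_mem_nhdsWithin] with z hz
      exact simplexPdf_nonneg hσ2 hz.1 hz.2
    · have hev : ∀ᶠ z in 𝓝[Set.Icc 0 1] (0:ℝ), z < μ/2 :=
        eventually_nhdsWithin_of_eventually_nhds (eventually_lt_nhds (by linarith))
      filter_upwards [self_mem_nhdsWithin, hev] with z hz hzlt
      rcases eq_or_lt_of_le hz.1 with hz0 | hz0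
      · rw [← hz0, simplexPdf_zero]
        norm_num
      · have hz1 : z < 1 := by linarith
        have habs : μ/2 ≤ |z - μ| := by
          rw [abs_of_neg (by linarith : z - μ < 0)]
          linarith
        exact simplexPdf_le hμ0 hμ1 hσ2 (by linarith) hz0 hz1 habs
    · have hcont : Continuous fun z : ℝ =>
          (Real.sqrt (2*π*σ2))⁻¹ * 27 * (2*σ2*(μ*(1-μ))^2/(μ/2)^2)^3 * (Real.sqrt (z*(1-z)))^3 := by
        continuity
      have := (hcont.tendsto 0).mono_left (nhdsWithin_le_nhds (s := Set.Icc 0 1))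
      convert this using 2
      norm_num
  rcases eq_or_lt_of_le hy.2 with h1 | h1
  · -- y = 1
    rw [ContinuousWithinAt, h1, simplexPdf_one]
    apply squeeze_zero' (g := fun z : ℝ =>
      (Real.sqrt (2*π*σ2))⁻¹ * 27 * (2*σ2*(μ*(1-μ))^2/((1-μ)/2)^2)^3 * (Real.sqrt (z*(1-z)))^3)
    · filter_upwards [self_mem_nhdsWithin] with z hz
      exact simplexPdf_nonneg hσ2 hz.1 hz.2
    · have hev : ∀ᶠ z in 𝓝[Set.Icc 0 1] (1:ℝ), (1+μ)/2 < z :=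
        eventually_nhdsWithin_of_eventually_nhds (eventually_gt_nhds (by linarith))
      filter_upwards [self_mem_nhdsWithin, hev] with z hz hzgt
      rcases eq_or_lt_of_le hz.2 with hz1 | hz1
      · rw [hz1, simplexPdf_one]
        norm_num
      · have hz0 : 0 < z := by linarith
        have habs : (1-μ)/2 ≤ |z - μ| := by
          rw [abs_of_pos (by linarith : 0 < z - μ)]
          linarith
        exact simplexPdf_le hμ0 hμ1 hσ2 (by linarith) hz0 hz1 habs
    · have hcont : Continuous fun z : ℝ =>
          (Real.sqrt (2*π*σ2))⁻¹ * 27 * (2*σ2*(μ*(1-μ))^2/((1-μ)/2)^2)^3 * (Real.sqrt (z*(1-z)))^3 := by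
        continuity
      have := (hcont.tendsto 1).mono_left (nhdsWithin_le_nhds (s := Set.Icc 0 1))
      convert this using 2
      norm_num
  · -- interior
    apply ContinuousAt.continuousWithinAt
    have ht : 0 < y*(1-y) := by nlinarith
    apply ContinuousAt.mul
    · have hcp : ContinuousAt (fun y:ℝ => 2*π*σ2*(y*(1-y))^3) y := by fun_prop
      have hne : 2*π*σ2*(y*(1-y))^3 ≠ 0 :=
        (mul_pos (by positivity) (pow_pos ht 3)).ne'
      exact hcp.rpow_const (Or.inl hne)
    · apply Real.continuous_exp.continuousAt.comp
      apply ContinuousAt.div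
      · apply ContinuousAt.neg
        unfold simplexDev
        apply ContinuousAt.div (by fun_prop) (by fun_prop)
        have hμ1' : (0:ℝ) < 1 - μ := by linarith
        exact (mul_pos (mul_pos ht (pow_pos hμ0 2)) (pow_pos hμ1' 2)).ne'
      · fun_prop
      · positivity

/-- The simplex density integrates to one over the unit interval. -/
theorem simplexPdf_integral_eq_one (μ σ2 : ℝ) (hμ : μ ∈ Set.Ioo (0:ℝ) 1)
    (hσ2 : 0 < σ2) :
    ∫ y in (0:ℝ)..1, simplexPdf y μ σ2 = 1 := by
  obtain ⟨hμ0, hμ1⟩ := hμ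
  have hc : 0 < μ*(1-μ) := by nlinarith
  have hsq : 0 < Real.sqrt (2*π*σ2) := Real.sqrt_pos.2 (by positivity)
  set I := ∫ s in Set.Ioi (0:ℝ), Real.exp (-(s^2) / (2*σ2)) with hIdef
  set C := (1-2*μ) * Real.exp (2/((μ*(1-μ))*σ2)) with hCdef
  set A := (Real.sqrt (2*π*σ2))⁻¹ with hAdef
  -- endpoint behaviour of the two substitution functions
  have hdenom0 : Tendsto (fun y : ℝ => (μ*(1-μ)) * Real.sqrt (y*(1-y))) (𝓝[>] (0:ℝ))
      (𝓝[>] (0:ℝ)) := by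
    rw [tendsto_nhdsWithin_iff]
    constructor
    · have hco : Continuous fun y : ℝ => (μ*(1-μ)) * Real.sqrt (y*(1-y)) := by continuity
      have := (hco.tendsto 0).mono_left (nhdsWithin_le_nhds (s := Set.Ioi 0))
      convert this using 2
      norm_num
    · filter_upwards [Ioo_mem_nhdsGT_of_mem (Set.left_mem_Ico.2 one_pos)] with z hz
      have ht : 0 < z*(1-z) := by nlinarith [hz.1, hz.2]
      exact Set.mem_Ioi.2 (by positivity)
  have hdenom1 : Tendsto (fun y : ℝ => (μ*(1-μ)) * Real.sqrt (y*(1-y))) (𝓝[<] (1:ℝ))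
      (𝓝[>] (0:ℝ)) := by
    rw [tendsto_nhdsWithin_iff]
    constructor
    · have hco : Continuous fun y : ℝ => (μ*(1-μ)) * Real.sqrt (y*(1-y)) := by continuity
      have := (hco.tendsto 1).mono_left (nhdsWithin_le_nhds (s := Set.Iio 1))
      convert this using 2
      norm_num
    · filter_upwards [Ioo_mem_nhdsLT_of_mem (Set.right_mem_Ioc.2 one_pos)] with z hz
      have ht : 0 < z*(1-z) := by nlinarith [hz.1, hz.2]
      exact Set.mem_Ioi.2 (by positivity)
  have hinv0 := tendsto_inv_nhdsGT_zero.comp hdenom0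
  have hinv1 := tendsto_inv_nhdsGT_zero.comp hdenom1
  -- g at the endpoints
  have hg0 : Tendsto (fun y : ℝ => (y-μ)/((μ*(1-μ)) * Real.sqrt (y*(1-y)))) (𝓝[>] (0:ℝ))
      atBot := by
    have hnum : Tendsto (fun y : ℝ => y - μ) (𝓝[>] (0:ℝ)) (𝓝 (-μ)) := by
      have : Tendsto (fun y : ℝ => y - μ) (𝓝 (0:ℝ)) (𝓝 (0 - μ)) :=
        (continuous_id.sub continuous_const).tendsto 0
      rw [zero_sub] at this
      exact this.mono_left nhdsWithin_le_nhds
    have := Tendsto.neg_mul_atTop (by linarith : -μ < 0) hnum hinv0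
    exact this.congr fun y => by rw [Function.comp_apply, div_eq_mul_inv]
  have hg1 : Tendsto (fun y : ℝ => (y-μ)/((μ*(1-μ)) * Real.sqrt (y*(1-y)))) (𝓝[<] (1:ℝ))
      atTop := by
    have hnum : Tendsto (fun y : ℝ => y - μ) (𝓝[<] (1:ℝ)) (𝓝 (1-μ)) := by
      exact ((continuous_id.sub continuous_const).tendsto 1).mono_left nhdsWithin_le_nhds
    have := Tendsto.pos_mul_atTop (by linarith : (0:ℝ) < 1-μ) hnum hinv1
    exact this.congr fun y => by rw [Function.comp_apply, div_eq_mul_inv]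
  -- k at the endpoints
  have hk0 : Tendsto (fun y : ℝ => (y+μ-2*μ*y)/((μ*(1-μ)) * Real.sqrt (y*(1-y)))) (𝓝[>] (0:ℝ))
      atTop := by
    have hnum : Tendsto (fun y : ℝ => y+μ-2*μ*y) (𝓝[>] (0:ℝ)) (𝓝 μ) := by
      have : Tendsto (fun y : ℝ => y+μ-2*μ*y) (𝓝 (0:ℝ)) (𝓝 (0+μ-2*μ*0)) := by
        apply Continuous.tendsto
        continuity
      rw [show (0:ℝ)+μ-2*μ*0 = μ by ring] at this
      exact this.mono_left nhdsWithin_le_nhds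
    have := Tendsto.pos_mul_atTop hμ0 hnum hinv0
    exact this.congr fun y => by rw [Function.comp_apply, div_eq_mul_inv]
  have hk1 : Tendsto (fun y : ℝ => (y+μ-2*μ*y)/((μ*(1-μ)) * Real.sqrt (y*(1-y)))) (𝓝[<] (1:ℝ))
      atTop := by
    have hnum : Tendsto (fun y : ℝ => y+μ-2*μ*y) (𝓝[<] (1:ℝ)) (𝓝 (1-μ)) := by
      have : Tendsto (fun y : ℝ => y+μ-2*μ*y) (𝓝 (1:ℝ)) (𝓝 (1+μ-2*μ*1)) := by
        apply Continuous.tendsto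
        continuity
      rw [show (1:ℝ)+μ-2*μ*1 = 1-μ by ring] at this
      exact this.mono_left nhdsWithin_le_nhds
    have := Tendsto.pos_mul_atTop (by linarith : (0:ℝ) < 1-μ) hnum hinv1
    exact this.congr fun y => by rw [Function.comp_apply, div_eq_mul_inv]
  -- limits of H at the endpoints
  have ha : Tendsto (fun y => A * (simF σ2 ((y-μ)/((μ*(1-μ)) * Real.sqrt (y*(1-y))))
      - C * simF σ2 ((y+μ-2*μ*y)/((μ*(1-μ)) * Real.sqrt (y*(1-y)))))) (𝓝[>] (0:ℝ))
      (𝓝 (A * (-I - C * I))) := by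
    have h1 := (simF_tendsto_atBot hσ2).comp hg0
    have h2 := (simF_tendsto_atTop hσ2).comp hk0
    exact ((h1.sub (h2.const_mul C)).const_mul A).congr fun y => rfl
  have hb : Tendsto (fun y => A * (simF σ2 ((y-μ)/((μ*(1-μ)) * Real.sqrt (y*(1-y))))
      - C * simF σ2 ((y+μ-2*μ*y)/((μ*(1-μ)) * Real.sqrt (y*(1-y)))))) (𝓝[<] (1:ℝ))
      (𝓝 (A * (I - C * I))) := by
    have h1 := (simF_tendsto_atTop hσ2).comp hg1
    have h2 := (simF_tendsto_atTop hσ2).comp hk1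
    exact ((h1.sub (h2.const_mul C)).const_mul A).congr fun y => rfl
  have hint : IntervalIntegrable (fun y => simplexPdf y μ σ2) volume 0 1 := by
    apply ContinuousOn.intervalIntegrable
    rw [Set.uIcc_of_le (by norm_num : (0:ℝ) ≤ 1)]
    exact simplexPdf_continuousOn hμ0 hμ1 hσ2
  have hderiv : ∀ y ∈ Set.Ioo (0:ℝ) 1,
      HasDerivAt (fun y => A * (simF σ2 ((y-μ)/((μ*(1-μ)) * Real.sqrt (y*(1-y))))
        - C * simF σ2 ((y+μ-2*μ*y)/((μ*(1-μ)) * Real.sqrt (y*(1-y))))))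
        (simplexPdf y μ σ2) y := fun y hy =>
    simplexDev_deriv_aux hμ0 hμ1 hσ2 hy.1 hy.2
  rw [integral_eq_sub_of_hasDerivAt_of_tendsto one_pos hderiv hint ha hb]
  have h2I : 2*I = Real.sqrt (2*π*σ2) := simF_two_integral hσ2
  have : A * (I - C * I) - A * (-I - C * I) = A * (2*I) := by ring
  rw [this, h2I, hAdef, inv_mul_cancel₀ hsq.ne']
end

section
/- For every μ ∈ (0,1) and every σ² > 0, the mean of the simplex distribution equals μ: ∫₀¹ y · p(y;μ,σ²) dy = μ. -/
open Real MeasureTheory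

open Set

noncomputable def sphi (μ y : ℝ) : ℝ := (y - μ) / (μ * (1 - μ) * Real.sqrt (y * (1 - y)))

noncomputable def sY (μ u : ℝ) : ℝ :=
  (2*μ + u^2*(μ*(1-μ))^2 + u*(μ*(1-μ)) * Real.sqrt (u^2*(μ*(1-μ))^2 + 4*(μ*(1-μ)))) /
    (2*(1 + u^2*(μ*(1-μ))^2))

section

variable {μ : ℝ} (h0 : 0 < μ) (h1 : μ < 1)
include h0 h1

lemma sY_mem (u : ℝ) : sY μ u ∈ Set.Ioo (0:ℝ) 1 := by
  have ha : 0 < μ * (1 - μ) := by nlinarith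
  set s := Real.sqrt (u^2*(μ*(1-μ))^2 + 4*(μ*(1-μ))) with hs
  have hs0 : 0 ≤ s := Real.sqrt_nonneg _
  have hs2 : s^2 = u^2*(μ*(1-μ))^2 + 4*(μ*(1-μ)) := Real.sq_sqrt (by positivity)
  have hden : (0:ℝ) < 2*(1 + u^2*(μ*(1-μ))^2) := by positivity
  have key1 : (2*μ + u^2*(μ*(1-μ))^2 + u*(μ*(1-μ))*s) * (2*μ + u^2*(μ*(1-μ))^2 - u*(μ*(1-μ))*s)
      = 4*μ^2*(1 + u^2*(μ*(1-μ))^2) := by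
    linear_combination (-(u^2*(μ*(1-μ))^2)) * hs2
  have key2 : (2*(1-μ) + u^2*(μ*(1-μ))^2 - u*(μ*(1-μ))*s) * (2*(1-μ) + u^2*(μ*(1-μ))^2 + u*(μ*(1-μ))*s)
      = 4*(1-μ)^2*(1 + u^2*(μ*(1-μ))^2) := by
    linear_combination (-(u^2*(μ*(1-μ))^2)) * hs2
  have hpos1 : (0:ℝ) < 4*μ^2*(1 + u^2*(μ*(1-μ))^2) := by positivity
  have hpos2 : (0:ℝ) < 4*(1-μ)^2*(1 + u^2*(μ*(1-μ))^2) := by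
    have h2 : (0:ℝ) < (1-μ)^2 := by nlinarith
    positivity
  have hnum : 0 < 2*μ + u^2*(μ*(1-μ))^2 + u*(μ*(1-μ))*s := by
    by_contra hle
    push_neg at hle
    have h2 : 0 < 2*μ + u^2*(μ*(1-μ))^2 := by positivity
    have hY : 0 < 2*μ + u^2*(μ*(1-μ))^2 - u*(μ*(1-μ))*s := by linarith
    nlinarith [mul_nonneg (neg_nonneg.2 hle) hY.le]
  have hnum2 : 0 < 2*(1-μ) + u^2*(μ*(1-μ))^2 - u*(μ*(1-μ))*s := by
    by_contra hle
    push_neg at hle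
    have hc : (0:ℝ) ≤ u^2*(μ*(1-μ))^2 := by positivity
    have h2 : 0 < 2*(1-μ) + u^2*(μ*(1-μ))^2 := by nlinarith
    have hY : 0 < 2*(1-μ) + u^2*(μ*(1-μ))^2 + u*(μ*(1-μ))*s := by linarith
    nlinarith [mul_nonneg (neg_nonneg.2 hle) hY.le]
  constructor
  · rw [sY]
    positivity
  · rw [sY, div_lt_one hden]
    linarith

lemma sY_quad (u : ℝ) : (sY μ u - μ)^2 = u^2*(μ*(1-μ))^2 * (sY μ u * (1 - sY μ u)) := by
  have ha : 0 < μ * (1 - μ) := by nlinarith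
  rw [sY]
  set s := Real.sqrt (u^2*(μ*(1-μ))^2 + 4*(μ*(1-μ))) with hs
  have hs2 : s^2 = u^2*(μ*(1-μ))^2 + 4*(μ*(1-μ)) := Real.sq_sqrt (by positivity)
  have hden : (2*(1 + u^2*(μ*(1-μ))^2)) ≠ 0 := by positivity
  have hNum : (2*μ + u^2*(μ*(1-μ))^2 + u*(μ*(1-μ))*s - μ*(2*(1 + u^2*(μ*(1-μ))^2)))^2
      = u^2*(μ*(1-μ))^2 * ((2*μ + u^2*(μ*(1-μ))^2 + u*(μ*(1-μ))*s) *
        (2*(1 + u^2*(μ*(1-μ))^2) - (2*μ + u^2*(μ*(1-μ))^2 + u*(μ*(1-μ))*s))) := by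
    linear_combination (u^2*(μ*(1-μ))^2*(1+u^2*(μ*(1-μ))^2)) * hs2
  have e1 : (2*μ + u^2*(μ*(1-μ))^2 + u*(μ*(1-μ))*s) / (2*(1 + u^2*(μ*(1-μ))^2)) - μ
      = (2*μ + u^2*(μ*(1-μ))^2 + u*(μ*(1-μ))*s - μ*(2*(1 + u^2*(μ*(1-μ))^2)))
        / (2*(1 + u^2*(μ*(1-μ))^2)) := by
    field_simp
  have e2 : (2*μ + u^2*(μ*(1-μ))^2 + u*(μ*(1-μ))*s) / (2*(1 + u^2*(μ*(1-μ))^2)) *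
      (1 - (2*μ + u^2*(μ*(1-μ))^2 + u*(μ*(1-μ))*s) / (2*(1 + u^2*(μ*(1-μ))^2)))
      = ((2*μ + u^2*(μ*(1-μ))^2 + u*(μ*(1-μ))*s) *
        (2*(1 + u^2*(μ*(1-μ))^2) - (2*μ + u^2*(μ*(1-μ))^2 + u*(μ*(1-μ))*s)))
        / (2*(1 + u^2*(μ*(1-μ))^2))^2 := by
    rw [one_sub_div hden, div_mul_div_comm]; ring
  rw [e1, e2, div_pow, hNum]
  ring

lemma sY_sign {u : ℝ} (hu : 0 ≤ u) : μ ≤ sY μ u := by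
  have ha : 0 < μ * (1 - μ) := by nlinarith
  set s := Real.sqrt (u^2*(μ*(1-μ))^2 + 4*(μ*(1-μ))) with hs
  have hs0 : 0 ≤ s := Real.sqrt_nonneg _
  have hs2 : s^2 = u^2*(μ*(1-μ))^2 + 4*(μ*(1-μ)) := Real.sq_sqrt (by positivity)
  have hden : (0:ℝ) < 2*(1 + u^2*(μ*(1-μ))^2) := by positivity
  have key : (u^2*(μ*(1-μ))^2*(1-2*μ) + u*(μ*(1-μ))*s) * (u*(μ*(1-μ))*s - u^2*(μ*(1-μ))^2*(1-2*μ))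
      = 4*(μ*(1-μ))*u^2*(μ*(1-μ))^2*(1 + u^2*(μ*(1-μ))^2) := by
    linear_combination (u^2*(μ*(1-μ))^2) * hs2
  have hnum : 0 ≤ u^2*(μ*(1-μ))^2*(1-2*μ) + u*(μ*(1-μ))*s := by
    by_contra hle
    push_neg at hle
    have huas : 0 ≤ u*(μ*(1-μ))*s := by positivity
    have hY : 0 < u*(μ*(1-μ))*s - u^2*(μ*(1-μ))^2*(1-2*μ) := by linarith
    have hrhs : (0:ℝ) ≤ 4*(μ*(1-μ))*u^2*(μ*(1-μ))^2*(1 + u^2*(μ*(1-μ))^2) := by positivity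
    nlinarith [mul_nonneg (neg_nonneg.2 hle.le) hY.le]
  rw [sY, le_div_iff₀ hden]
  linarith

lemma sY_sign' {u : ℝ} (hu : u ≤ 0) : sY μ u ≤ μ := by
  have ha : 0 < μ * (1 - μ) := by nlinarith
  set s := Real.sqrt (u^2*(μ*(1-μ))^2 + 4*(μ*(1-μ))) with hs
  have hs0 : 0 ≤ s := Real.sqrt_nonneg _
  have hs2 : s^2 = u^2*(μ*(1-μ))^2 + 4*(μ*(1-μ)) := Real.sq_sqrt (by positivity)
  have hden : (0:ℝ) < 2*(1 + u^2*(μ*(1-μ))^2) := by positivity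
  have key : (u^2*(μ*(1-μ))^2*(1-2*μ) + u*(μ*(1-μ))*s) * (u*(μ*(1-μ))*s - u^2*(μ*(1-μ))^2*(1-2*μ))
      = 4*(μ*(1-μ))*u^2*(μ*(1-μ))^2*(1 + u^2*(μ*(1-μ))^2) := by
    linear_combination (u^2*(μ*(1-μ))^2) * hs2
  have hnum : u^2*(μ*(1-μ))^2*(1-2*μ) + u*(μ*(1-μ))*s ≤ 0 := by
    by_contra hle
    push_neg at hle
    have huas : u*(μ*(1-μ))*s ≤ 0 := by
      have h' : 0 ≤ (-u)*(μ*(1-μ))*s := by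
        have : 0 ≤ -u := by linarith
        positivity
      nlinarith
    have hY : u*(μ*(1-μ))*s - u^2*(μ*(1-μ))^2*(1-2*μ) < 0 := by linarith
    have hrhs : (0:ℝ) ≤ 4*(μ*(1-μ))*u^2*(μ*(1-μ))^2*(1 + u^2*(μ*(1-μ))^2) := by positivity
    nlinarith [mul_nonneg hle.le (neg_nonneg.2 hY.le)]
  rw [sY, div_le_iff₀ hden]
  linarith

lemma sphi_sY (u : ℝ) : sphi μ (sY μ u) = u := by
  have ha : 0 < μ * (1 - μ) := by nlinarith
  obtain ⟨hY0, hY1⟩ := sY_mem h0 h1 u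
  have hw : 0 < sY μ u * (1 - sY μ u) := by nlinarith
  have hsw : 0 < Real.sqrt (sY μ u * (1 - sY μ u)) := Real.sqrt_pos.2 hw
  have hq := sY_quad h0 h1 u
  have h2 : (sY μ u - μ)^2 = (u * (μ*(1-μ)) * Real.sqrt (sY μ u * (1 - sY μ u)))^2 := by
    rw [mul_pow, mul_pow, Real.sq_sqrt hw.le]
    linear_combination hq
  have hfac : (sY μ u - μ - u*(μ*(1-μ))*Real.sqrt (sY μ u * (1 - sY μ u))) *
      (sY μ u - μ + u*(μ*(1-μ))*Real.sqrt (sY μ u * (1 - sY μ u))) = 0 := by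
    linear_combination h2
  have hkey : sY μ u - μ = u * (μ*(1-μ)) * Real.sqrt (sY μ u * (1 - sY μ u)) := by
    rcases mul_eq_zero.1 hfac with h | h
    · linarith
    · rcases le_or_gt 0 u with hu | hu
      · have hA : μ ≤ sY μ u := sY_sign h0 h1 hu
        have hB : 0 ≤ u * (μ*(1-μ)) * Real.sqrt (sY μ u * (1 - sY μ u)) := by positivity
        linarith
      · have hA : sY μ u ≤ μ := sY_sign' h0 h1 hu.le
        have hB : u * (μ*(1-μ)) * Real.sqrt (sY μ u * (1 - sY μ u)) ≤ 0 := by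
          have h' : 0 ≤ (-u) * (μ*(1-μ)) * Real.sqrt (sY μ u * (1 - sY μ u)) := by
            have : 0 ≤ -u := by linarith
            positivity
          nlinarith
        linarith
  have hne : μ*(1-μ) * Real.sqrt (sY μ u * (1 - sY μ u)) ≠ 0 := by positivity
  rw [sphi, hkey, mul_assoc, mul_div_assoc, div_self hne, mul_one]

end

section
variable {μ : ℝ} (h0 : 0 < μ) (h1 : μ < 1)
include h0 h1

lemma sY_sphi {y : ℝ} (hy : y ∈ Set.Ioo (0:ℝ) 1) : sY μ (sphi μ y) = y := by
  obtain ⟨hy0, hy1⟩ := hy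
  have ha : 0 < μ * (1 - μ) := by nlinarith
  have hw : 0 < y * (1 - y) := by nlinarith
  have hsw : 0 < Real.sqrt (y * (1 - y)) := Real.sqrt_pos.2 hw
  have hww : Real.sqrt (y*(1-y)) * Real.sqrt (y*(1-y)) = y*(1-y) := Real.mul_self_sqrt hw.le
  have hD : 0 < y*(1-2*μ)+μ := by nlinarith
  have hu2 : (sphi μ y)^2*(μ*(1-μ))^2 = (y-μ)^2/(y*(1-y)) := by
    rw [sphi, div_pow, mul_pow, Real.sq_sqrt hw.le]
    field_simp
    rw [mul_div_cancel_right₀ _ (by linarith : (1-μ) ≠ 0)]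
  have hua : sphi μ y * (μ*(1-μ)) = (y-μ)/Real.sqrt (y*(1-y)) := by
    rw [sphi, div_mul_eq_mul_div, mul_comm (μ*(1-μ)) (Real.sqrt (y*(1-y))), ← div_div,
      div_right_comm, mul_div_assoc, div_self ha.ne', mul_one]
  have harg : (sphi μ y)^2*(μ*(1-μ))^2 + 4*(μ*(1-μ))
      = ((y*(1-2*μ)+μ)/Real.sqrt (y*(1-y)))^2 := by
    rw [hu2, div_pow, Real.sq_sqrt hw.le]
    field_simp
    ring
  have hsqrt : Real.sqrt ((sphi μ y)^2*(μ*(1-μ))^2 + 4*(μ*(1-μ)))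
      = (y*(1-2*μ)+μ)/Real.sqrt (y*(1-y)) := by
    rw [harg, Real.sqrt_sq (by positivity)]
  have hQ : y*(1-y) + (y-μ)^2 ≠ 0 := by nlinarith [sq_nonneg (y-μ)]
  rw [sY, hsqrt, hu2, hua, div_mul_div_comm, hww]
  field_simp
  ring

end

section
variable {μ : ℝ} (h0 : 0 < μ) (h1 : μ < 1)
include h0 h1

lemma sD_pos (u : ℝ) : 0 < sY μ u * (1-2*μ) + μ := by
  obtain ⟨a1, a2⟩ := sY_mem h0 h1 u
  nlinarith

lemma sOdd (u : ℝ) : μ*(sY μ (-u) - μ)/(sY μ (-u)*(1-2*μ)+μ)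
    = -(μ*(sY μ u - μ)/(sY μ u*(1-2*μ)+μ)) := by
  have ha : 0 < μ * (1 - μ) := by nlinarith
  have hD1 := sD_pos h0 h1 u
  have hD2 := sD_pos h0 h1 (-u)
  rw [← neg_div, div_eq_div_iff hD2.ne' hD1.ne']
  set s := Real.sqrt (u^2*(μ*(1-μ))^2 + 4*(μ*(1-μ))) with hs
  have hs2 : s^2 = u^2*(μ*(1-μ))^2 + 4*(μ*(1-μ)) := Real.sq_sqrt (by positivity)
  have hrep : sY μ (-u) = (2*μ + u^2*(μ*(1-μ))^2 - u*(μ*(1-μ))*s)/(2*(1+u^2*(μ*(1-μ))^2)) := by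
    rw [sY, neg_sq, ← hs]
    ring
  have hden : (2*(1 + u^2*(μ*(1-μ))^2)) ≠ 0 := by positivity
  rw [hrep, sY, ← hs]
  field_simp
  linear_combination (-2*(1-2*μ)*u^2*(1-μ)^2) * hs2


lemma sphi_hasDeriv {y : ℝ} (hy : y ∈ Set.Ioo (0:ℝ) 1) :
    HasDerivAt (sphi μ)
      ((y*(1-2*μ)+μ) / (2*(μ*(1-μ)) * Real.sqrt (y*(1-y))^3)) y := by
  obtain ⟨hy0, hy1⟩ := hy
  have ha : 0 < μ * (1 - μ) := by nlinarith
  have hw : 0 < y * (1 - y) := by nlinarith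
  have hsw : 0 < Real.sqrt (y * (1 - y)) := Real.sqrt_pos.2 hw
  have hww : Real.sqrt (y*(1-y)) ^ 2 = y*(1-y) := Real.sq_sqrt hw.le
  have hinner : HasDerivAt (fun t : ℝ => t*(1-t)) (1*(1-y) + y*(-1)) y := by
    exact (hasDerivAt_id y).mul ((hasDerivAt_id y).const_sub 1)
  have hsq : HasDerivAt (fun t : ℝ => Real.sqrt (t*(1-t)))
      ((1*(1-y) + y*(-1))/(2*Real.sqrt (y*(1-y)))) y := hinner.sqrt hw.ne'
  have hg : HasDerivAt (fun t : ℝ => μ*(1-μ) * Real.sqrt (t*(1-t)))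
      (μ*(1-μ)*((1*(1-y) + y*(-1))/(2*Real.sqrt (y*(1-y))))) y := hsq.const_mul _
  have hf : HasDerivAt (fun t : ℝ => t - μ) 1 y := (hasDerivAt_id y).sub_const μ
  have hne : μ*(1-μ)*Real.sqrt (y*(1-y)) ≠ 0 := by positivity
  have h := hf.div hg hne
  have heq : sphi μ = fun t : ℝ => (t - μ)/(μ*(1-μ)*Real.sqrt (t*(1-t))) := rfl
  rw [heq]
  refine h.congr_deriv ?_
  set T := Real.sqrt (y*(1-y)) with hT
  field_simp
  linear_combination (2/(1-μ)) * hww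

omit h0 h1 in
lemma sY_cont : Continuous (sY μ) := by
  unfold sY
  apply Continuous.div
  · fun_prop
  · fun_prop
  · intro u
    positivity

end

/-- The mean of the simplex distribution equals μ. -/
theorem simplexPdf_mean_eq (μ σ2 : ℝ) (hμ : μ ∈ Set.Ioo (0:ℝ) 1)
    (hσ2 : 0 < σ2) :
    ∫ y in (0:ℝ)..1, y * simplexPdf y μ σ2 = μ := by
  obtain ⟨hμ0, hμ1⟩ := hμ
  have ha : 0 < μ*(1-μ) := by nlinarith
  have h2πσ : (0:ℝ) < 2*Real.pi*σ2 := by positivity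
  set G : ℝ → ℝ := fun u => (2*Real.pi*σ2) ^ (-(1/2) : ℝ) * (Real.exp (-u^2/(2*σ2)) *
      (μ + μ*(sY μ u - μ)/(sY μ u*(1-2*μ)+μ))) with hG
  have himg : sphi μ '' (Set.Ioo 0 1) = Set.univ :=
    Set.eq_univ_of_forall fun u => ⟨sY μ u, sY_mem hμ0 hμ1 u, sphi_sY hμ0 hμ1 u⟩
  have hinj : Set.InjOn (sphi μ) (Set.Ioo 0 1) := fun y1 h1 y2 h2 he => by
    rw [← sY_sphi hμ0 hμ1 h1, he, sY_sphi hμ0 hμ1 h2]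
  have hCOV := integral_image_eq_integral_abs_deriv_smul measurableSet_Ioo
      (fun y hy => (sphi_hasDeriv hμ0 hμ1 hy).hasDerivWithinAt) hinj G
  rw [himg, setIntegral_univ] at hCOV
  have hpt : Set.EqOn (fun y => y * simplexPdf y μ σ2)
      (fun y => |(y*(1-2*μ)+μ) / (2*(μ*(1-μ)) * Real.sqrt (y*(1-y))^3)| • G (sphi μ y))
      (Set.Ioo 0 1) := by
    intro y hy
    obtain ⟨hy0, hy1⟩ := hy
    have hw : 0 < y*(1-y) := by nlinarith
    have hsw : 0 < Real.sqrt (y*(1-y)) := Real.sqrt_pos.2 hw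
    have hD : 0 < y*(1-2*μ)+μ := by nlinarith
    have hd' : 0 < (y*(1-2*μ)+μ) / (2*(μ*(1-μ)) * Real.sqrt (y*(1-y))^3) := by positivity
    simp only []
    rw [abs_of_pos hd', smul_eq_mul]
    simp only [hG]
    rw [sY_sphi hμ0 hμ1 ⟨hy0, hy1⟩]
    have hphisq : sphi μ y ^ 2 = simplexDev y μ := by
      rw [sphi, simplexDev, div_pow, mul_pow, Real.sq_sqrt hw.le]
      ring
    rw [hphisq, simplexPdf]
    have hsplit : (2*Real.pi*σ2*(y*(1-y))^3) ^ (-(1/2) : ℝ)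
        = (2*Real.pi*σ2) ^ (-(1/2) : ℝ) * ((y*(1-y)) * Real.sqrt (y*(1-y)))⁻¹ := by
      rw [Real.mul_rpow (le_of_lt h2πσ) (by positivity)]
      congr 1
      rw [Real.rpow_neg (by positivity), ← Real.sqrt_eq_rpow]
      congr 1
      rw [pow_succ, Real.sqrt_mul (by positivity), Real.sqrt_sq hw.le]
    rw [hsplit]
    have hfrac : μ + μ*(y-μ)/(y*(1-2*μ)+μ) = 2*(μ*(1-μ))*y/(y*(1-2*μ)+μ) := by
      rw [eq_div_iff hD.ne', add_mul, div_mul_cancel₀ _ hD.ne']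
      ring
    rw [hfrac]
    have hcube : Real.sqrt (y*(1-y))^3 = (y*(1-y)) * Real.sqrt (y*(1-y)) := by
      rw [pow_succ, Real.sq_sqrt hw.le]
    rw [hcube]
    set T := Real.sqrt (y*(1-y)) with hT
    set P := (2*Real.pi*σ2) ^ (-(1/2) : ℝ) with hP
    field_simp
  rw [intervalIntegral.integral_of_le zero_le_one, integral_Ioc_eq_integral_Ioo,
    setIntegral_congr_fun measurableSet_Ioo hpt, ← hCOV]
  -- Gaussian normalization
  have hexp_eq : (fun u : ℝ => Real.exp (-u^2/(2*σ2)))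
      = fun u : ℝ => Real.exp (-(1/(2*σ2))*u^2) := by
    funext u
    congr 1
    field_simp
  have hIg : Integrable (fun u : ℝ => Real.exp (-u^2/(2*σ2))) := by
    rw [hexp_eq]
    exact integrable_exp_neg_mul_sq (by positivity)
  have hgauss : ∫ u : ℝ, Real.exp (-u^2/(2*σ2)) = Real.sqrt (2*Real.pi*σ2) := by
    rw [hexp_eq, integral_gaussian]
    congr 1
    field_simp
  -- odd part
  set F : ℝ → ℝ := fun u => μ*(sY μ u - μ)/(sY μ u*(1-2*μ)+μ) with hF
  have hFcont : Continuous F := by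
    apply Continuous.div
    · exact continuous_const.mul ((sY_cont).sub continuous_const)
    · exact ((sY_cont).mul continuous_const).add continuous_const
    · exact fun u => (sD_pos hμ0 hμ1 u).ne'
  have hFbdd : ∀ u, ‖F u‖ ≤ μ / min μ (1-μ) := by
    intro u
    obtain ⟨hY0, hY1⟩ := sY_mem hμ0 hμ1 u
    have hD := sD_pos hμ0 hμ1 u
    have hmin : 0 < min μ (1-μ) := lt_min hμ0 (by linarith)
    have hDge : min μ (1-μ) ≤ sY μ u*(1-2*μ)+μ := by
      rcases le_total μ (1-μ) with h | h
      · rw [min_eq_left h]; nlinarith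
      · rw [min_eq_right h]; nlinarith
    simp only [hF]
    rw [Real.norm_eq_abs, abs_div, abs_of_pos hD]
    have hnum : |μ*(sY μ u-μ)| ≤ μ := by
      rw [abs_mul, abs_of_pos hμ0]
      have h3 : |sY μ u-μ| ≤ 1 := abs_le.2 ⟨by linarith, by linarith⟩
      nlinarith
    exact div_le_div₀ hμ0.le hnum hmin hDge
  have hIodd : Integrable (fun u : ℝ => F u * Real.exp (-u^2/(2*σ2))) :=
    hIg.bdd_mul hFcont.aestronglyMeasurable (ae_of_all _ hFbdd)
  have hodd0 : ∫ u : ℝ, F u * Real.exp (-u^2/(2*σ2)) = 0 := by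
    have hneg : ∀ u : ℝ, F (-u) * Real.exp (-(-u)^2/(2*σ2))
        = -(F u * Real.exp (-u^2/(2*σ2))) := by
      intro u
      simp only [hF]
      rw [neg_sq, sOdd hμ0 hμ1]
      ring
    have e1 : ∫ u : ℝ, F (-u) * Real.exp (-(-u)^2/(2*σ2))
        = ∫ u : ℝ, F u * Real.exp (-u^2/(2*σ2)) :=
      integral_neg_eq_self (fun u : ℝ => F u * Real.exp (-u^2/(2*σ2))) volume
    simp only [hneg] at e1
    rw [integral_neg] at e1
    linarith
  -- final assembly
  have hGsplit : G = fun u => μ * ((2*Real.pi*σ2) ^ (-(1/2) : ℝ) * Real.exp (-u^2/(2*σ2)))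
      + (2*Real.pi*σ2) ^ (-(1/2) : ℝ) * (F u * Real.exp (-u^2/(2*σ2))) := by
    funext u
    simp only [hG, hF]
    ring
  rw [hGsplit]
  rw [integral_add (((hIg.const_mul _).const_mul _)) (hIodd.const_mul _)]
  rw [integral_const_mul, integral_const_mul, integral_const_mul, hgauss, hodd0, mul_zero, add_zero]
  rw [show ((2*Real.pi*σ2) ^ (-(1/2) : ℝ) * Real.sqrt (2*Real.pi*σ2)) = 1 from by
    rw [Real.sqrt_eq_rpow, ← Real.rpow_add h2πσ]
    norm_num, mul_one]
end

section
/- For every μ ∈ (0,1) and every σ² > 0, the expected unit deviance under the simplex distribution equals the dispersion parameter: ∫₀¹ d(y;μ) · p(y;μ,σ²) dy = σ². (Equivalently, the score with respect to σ², namely a(y;μ,σ²) = d(y;μ)/(2(σ²)²) − 1/(2σ²), has zero expectation.) -/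
open Real MeasureTheory Set Filter Topology

noncomputable def sqF (y : ℝ) : ℝ := Real.sqrt (y * (1 - y))

noncomputable def uF (μ y : ℝ) : ℝ := (y - μ) / (μ * (1 - μ) * sqF y)

noncomputable def wF (μ y : ℝ) : ℝ := (y + μ - 2*μ*y) / (μ * (1 - μ) * sqF y)

noncomputable def phiF (σ2 t : ℝ) : ℝ :=
  (2 * Real.pi * σ2) ^ (-(1/2) : ℝ) * Real.exp (-t^2 / (2*σ2))

noncomputable def PhiF (σ2 t : ℝ) : ℝ := ∫ x in (0:ℝ)..t, phiF σ2 x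

noncomputable def AF (μ σ2 y : ℝ) : ℝ :=
  σ2 * (PhiF σ2 (uF μ y) - uF μ y * phiF σ2 (uF μ y))
  + (1 - 2*μ) * Real.exp (2/(μ*(1-μ)*σ2)) *
      (σ2 * (wF μ y * phiF σ2 (wF μ y)) + (4/(μ*(1-μ)) - σ2) * PhiF σ2 (wF μ y))

section lemmas

variable {μ σ2 : ℝ} (hμ0 : 0 < μ) (hμ1 : μ < 1) (hσ2 : 0 < σ2)

lemma phiF_continuous : Continuous (phiF σ2) := by
  unfold phiF
  fun_prop

include hσ2 in
lemma phiF_integrable : Integrable (phiF σ2) := by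
  unfold phiF
  have h : ∀ t : ℝ, -t^2/(2*σ2) = -(2*σ2)⁻¹ * t^2 := by intro t; field_simp
  simp_rw [h]
  exact (integrable_exp_neg_mul_sq (by positivity)).const_mul _

include hσ2 in
lemma phiF_hasDeriv (t : ℝ) :
    HasDerivAt (PhiF σ2) (phiF σ2 t) t := by
  apply intervalIntegral.integral_hasDerivAt_right
    ((phiF_integrable hσ2).intervalIntegrable)
    (phiF_continuous.stronglyMeasurable.stronglyMeasurableAtFilter)
    phiF_continuous.continuousAt

include hσ2 in
lemma phiF_total : ∫ t : ℝ, phiF σ2 t = 1 := by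
  unfold phiF
  have h : ∀ t : ℝ, -t^2/(2*σ2) = -(2*σ2)⁻¹ * t^2 := by intro t; field_simp
  simp_rw [h]
  rw [MeasureTheory.integral_const_mul, integral_gaussian]
  have h1 : (π / (2*σ2)⁻¹) = 2 * π * σ2 := by field_simp
  rw [h1, Real.rpow_neg (by positivity), ← Real.sqrt_eq_rpow]
  rw [inv_mul_cancel₀ (by positivity)]

include hσ2 in
lemma PhiF_tendsto_atTop :
    Tendsto (PhiF σ2) atTop (𝓝 (∫ t in Ioi (0:ℝ), phiF σ2 t)) :=
  intervalIntegral_tendsto_integral_Ioi 0 (phiF_integrable hσ2).integrableOn tendsto_id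

include hσ2 in
lemma PhiF_tendsto_atBot :
    Tendsto (PhiF σ2) atBot (𝓝 (-∫ t in Iic (0:ℝ), phiF σ2 t)) := by
  have h := intervalIntegral_tendsto_integral_Iic 0 (phiF_integrable hσ2).integrableOn
    (tendsto_id (α := ℝ))
  have h2 : ∀ t : ℝ, PhiF σ2 t = -∫ x in t..0, phiF σ2 x := by
    intro t; rw [intervalIntegral.integral_symm]; simp [PhiF]
  have := h.neg
  exact this.congr (fun t => (h2 t).symm)

include hσ2 in
lemma mul_phiF_tendsto_cocompact :
    Tendsto (fun t => t * phiF σ2 t) (cocompact ℝ) (𝓝 0) := by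
  have ha : (0:ℝ) < (2*σ2)⁻¹ := by positivity
  have h := tendsto_rpow_abs_mul_exp_neg_mul_sq_cocompact ha 1
  rw [tendsto_zero_iff_abs_tendsto_zero]
  have he : ∀ t:ℝ, |t * phiF σ2 t|
      = (2*π*σ2)^(-(1/2):ℝ) * (|t|^(1:ℝ) * rexp (-(2*σ2)⁻¹ * t^2)) := by
    intro t
    rw [Real.rpow_one]
    unfold phiF
    rw [show -t^2/(2*σ2) = -(2*σ2)⁻¹*t^2 by field_simp]
    rw [abs_mul, abs_mul,
      abs_of_nonneg (by positivity : (0:ℝ) ≤ (2*π*σ2)^(-(1/2):ℝ)),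
      abs_of_nonneg (le_of_lt (Real.exp_pos _))]
    ring
  have := h.const_mul ((2*π*σ2)^(-(1/2):ℝ))
  rw [mul_zero] at this
  exact this.congr (fun t => (he t).symm)

include hσ2 in
lemma mul_phiF_tendsto_atTop : Tendsto (fun t => t * phiF σ2 t) atTop (𝓝 0) :=
  (mul_phiF_tendsto_cocompact hσ2).mono_left (by rw [cocompact_eq_atBot_atTop (α := ℝ)]; exact le_sup_right)

include hσ2 in
lemma mul_phiF_tendsto_atBot : Tendsto (fun t => t * phiF σ2 t) atBot (𝓝 0) :=
  (mul_phiF_tendsto_cocompact hσ2).mono_left (by rw [cocompact_eq_atBot_atTop (α := ℝ)]; exact le_sup_left)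

section y
variable {y : ℝ} (hy : y ∈ Set.Ioo (0:ℝ) 1)

include hy in
lemma y_pos : 0 < y := hy.1
include hy in
lemma y1_pos : 0 < 1 - y := by linarith [hy.2]
include hy in
lemma sqF_pos : 0 < sqF y := Real.sqrt_pos.2 (by nlinarith [hy.1, hy.2])
include hy in
lemma sq_sqF : sqF y ^ 2 = y * (1 - y) := Real.sq_sqrt (by nlinarith [hy.1, hy.2])

include hy hμ0 hμ1 in
lemma uF_sq : uF μ y ^ 2 = simplexDev y μ := by
  unfold uF simplexDev
  rw [div_pow]
  congr 1
  rw [mul_pow, mul_pow, sq_sqF hy]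
  ring

include hy hμ0 hμ1 in
lemma wF_sq : wF μ y ^ 2 = uF μ y ^ 2 + 4/(μ*(1-μ)) := by
  unfold wF uF
  rw [div_pow, div_pow, mul_pow, mul_pow, sq_sqF hy]
  have h1 : y ≠ 0 := (y_pos hy).ne'
  have h2 : (1:ℝ) - y ≠ 0 := (y1_pos hy).ne'
  have h3 : μ ≠ 0 := hμ0.ne'
  have h4 : (1:ℝ) - μ ≠ 0 := by linarith
  field_simp
  ring

include hy hμ0 hμ1 hσ2 in
lemma phiF_wF : phiF σ2 (wF μ y)
    = Real.exp (-(2/(μ*(1-μ)*σ2))) * phiF σ2 (uF μ y) := by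
  unfold phiF
  rw [wF_sq hμ0 hμ1 hy]
  have h4 : (1:ℝ) - μ ≠ 0 := by linarith
  rw [show -(uF μ y ^ 2 + 4/(μ*(1-μ)))/(2*σ2)
      = -(2/(μ*(1-μ)*σ2)) + -(uF μ y)^2/(2*σ2) by
    field_simp
    ring]
  rw [Real.exp_add]
  ring

include hy hμ0 hμ1 hσ2 in
lemma simplexPdf_eq : simplexPdf y μ σ2 = phiF σ2 (uF μ y) * (sqF y ^ 3)⁻¹ := by
  unfold simplexPdf phiF
  have hsp := sqF_pos hy
  have hyy : (0:ℝ) < y*(1-y) := by nlinarith [hy.1, hy.2]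
  have hq : (sqF y ^ 3) ^ 2 = (y*(1-y))^3 := by
    rw [← pow_mul, show 3*2 = 2*3 from rfl, pow_mul, sq_sqF hy]
  have h1 : (2*π*σ2*(y*(1-y))^3 : ℝ)^(-(1/2):ℝ)
      = (2*π*σ2)^(-(1/2):ℝ) * ((y*(1-y))^3)^(-(1/2):ℝ) :=
    Real.mul_rpow (by positivity) (by positivity)
  have h2 : ((y*(1-y))^3 : ℝ)^(-(1/2):ℝ) = (sqF y ^ 3)⁻¹ := by
    rw [← hq, ← Real.rpow_natCast (sqF y ^ 3) 2, ← Real.rpow_mul (by positivity)]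
    norm_num [Real.rpow_neg_one]
  rw [h1, h2, ← uF_sq hμ0 hμ1 hy]
  ring

include hy in
lemma sqF_hasDeriv : HasDerivAt sqF ((1-2*y)/(2*sqF y)) y := by
  have h0 : HasDerivAt (fun x : ℝ => x*(1-x)) (1*(1-y) + y*(0-1)) y :=
    (hasDerivAt_id y).mul ((hasDerivAt_const y (1:ℝ)).sub (hasDerivAt_id y))
  have h1 : HasDerivAt (fun x : ℝ => x*(1-x)) (1-2*y) y := by
    convert h0 using 1; ring
  have := h1.sqrt (by nlinarith [hy.1, hy.2])
  exact this

include hy hμ0 hμ1 in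
lemma uF_hasDeriv :
    HasDerivAt (uF μ) ((y + μ - 2*μ*y)/(2*μ*(1-μ)*sqF y^3)) y := by
  have hsp := sqF_pos hy
  have hs2 := sq_sqF hy
  have h4 : (0:ℝ) < 1 - μ := by linarith
  have hnum : HasDerivAt (fun x : ℝ => x - μ) 1 y := by
    exact (hasDerivAt_id' y).sub_const μ
  have hden : HasDerivAt (fun x : ℝ => μ*(1-μ)*sqF x)
      (μ*(1-μ)*((1-2*y)/(2*sqF y))) y := (sqF_hasDeriv hy).const_mul _
  have h := hnum.div hden (by positivity)
  refine h.congr_deriv (Eq.symm ?_)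
  rw [div_eq_div_iff (by positivity) (by positivity)]
  field_simp
  linear_combination (-2) * hs2

include hy hμ0 hμ1 in
lemma wF_hasDeriv :
    HasDerivAt (wF μ) ((y - μ)/(2*μ*(1-μ)*sqF y^3)) y := by
  have hsp := sqF_pos hy
  have hs2 := sq_sqF hy
  have h4 : (0:ℝ) < 1 - μ := by linarith
  have hnum : HasDerivAt (fun x : ℝ => x + μ - 2*μ*x) (1-2*μ) y := by
    have := ((hasDerivAt_id y).add (hasDerivAt_const y μ)).sub
      ((hasDerivAt_id y).const_mul (2*μ))
    exact this.congr_deriv (by ring)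
  have hden : HasDerivAt (fun x : ℝ => μ*(1-μ)*sqF x)
      (μ*(1-μ)*((1-2*y)/(2*sqF y))) y := (sqF_hasDeriv hy).const_mul _
  have h := hnum.div hden (by positivity)
  refine h.congr_deriv (Eq.symm ?_)
  rw [div_eq_div_iff (by positivity) (by positivity)]
  field_simp
  linear_combination (-2*(1-2*μ)) * hs2

include hσ2 in
lemma phiF_hasDeriv' (t : ℝ) : HasDerivAt (phiF σ2) (-t/σ2 * phiF σ2 t) t := by
  unfold phiF
  have h1 : HasDerivAt (fun t : ℝ => -t^2/(2*σ2)) (-t/σ2) t := by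
    have := ((hasDerivAt_pow 2 t).neg).div_const (2*σ2)
    exact this.congr_deriv (by field_simp; ring)
  have h2 := (h1.exp).const_mul ((2*π*σ2)^(-(1/2):ℝ))
  exact h2.congr_deriv (by ring)

include hy hμ0 hμ1 hσ2 in
lemma AF_hasDeriv : HasDerivAt (AF μ σ2) (simplexDev y μ * simplexPdf y μ σ2) y := by
  have hsp := sqF_pos hy
  have h4 : (0:ℝ) < 1 - μ := by linarith
  set U := uF μ y with hU
  set W := wF μ y with hW
  set u' := (y + μ - 2*μ*y)/(2*μ*(1-μ)*sqF y^3) with hu'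
  set w' := (y - μ)/(2*μ*(1-μ)*sqF y^3) with hw'
  have hu : HasDerivAt (uF μ) u' y := uF_hasDeriv hμ0 hμ1 hy
  have hw : HasDerivAt (wF μ) w' y := wF_hasDeriv hμ0 hμ1 hy
  have hPu : HasDerivAt (fun x => PhiF σ2 (uF μ x)) (phiF σ2 U * u') y :=
    by have := (phiF_hasDeriv hσ2 U).comp y hu; exact this
  have hpu : HasDerivAt (fun x => phiF σ2 (uF μ x)) ((-U/σ2 * phiF σ2 U) * u') y :=
    by have := (phiF_hasDeriv' hσ2 U).comp y hu; exact this
  have hPw : HasDerivAt (fun x => PhiF σ2 (wF μ x)) (phiF σ2 W * w') y :=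
    by have := (phiF_hasDeriv hσ2 W).comp y hw; exact this
  have hpw : HasDerivAt (fun x => phiF σ2 (wF μ x)) ((-W/σ2 * phiF σ2 W) * w') y :=
    by have := (phiF_hasDeriv' hσ2 W).comp y hw; exact this
  have hA := (((hPu.sub (hu.mul hpu)).const_mul σ2).add
    (((((hw.mul hpw)).const_mul σ2).add (hPw.const_mul (4/(μ*(1-μ)) - σ2))).const_mul
      ((1 - 2*μ) * Real.exp (2/(μ*(1-μ)*σ2)))))
  have hfun : AF μ σ2 = fun x =>
      σ2 * (PhiF σ2 (uF μ x) - uF μ x * phiF σ2 (uF μ x))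
      + (1 - 2*μ) * Real.exp (2/(μ*(1-μ)*σ2)) *
        (σ2 * (wF μ x * phiF σ2 (wF μ x)) + (4/(μ*(1-μ)) - σ2) * PhiF σ2 (wF μ x)) := rfl
  rw [hfun]
  refine hA.congr_deriv (Eq.symm ?_)
  -- now the algebraic identity
  rw [phiF_wF hμ0 hμ1 hσ2 hy, ← hU, ← hW]
  set P := phiF σ2 U with hP
  set E1 := Real.exp (2/(μ*(1-μ)*σ2)) with hE1
  set E2 := Real.exp (-(2/(μ*(1-μ)*σ2))) with hE2
  have hE : E1 * E2 = 1 := by rw [hE1, hE2, ← Real.exp_add]; simp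
  have hq : u' - (1-2*μ)*w' = (sqF y ^ 3)⁻¹ := by
    rw [hu', hw']
    field_simp
    ring
  have hw2 : W^2 = U^2 + 4/(μ*(1-μ)) := wF_sq hμ0 hμ1 hy
  have hD : σ2 * (P * u' - (u' * P + U * (-U/σ2 * P * u')))
      + (1 - 2*μ) * E1 * (σ2 * (w' * (E2 * P) + W * (-W/σ2 * (E2 * P) * w'))
        + (4/(μ*(1-μ)) - σ2) * (E2 * P * w'))
      = U^2*P*u' + (1-2*μ)*(E1*E2)*P*w'*(σ2 - W^2 + (4/(μ*(1-μ)) - σ2)) := by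
    field_simp
    ring
  rw [simplexPdf_eq hμ0 hμ1 hσ2 hy, ← uF_sq hμ0 hμ1 hy, ← hU, ← hP]
  rw [hD, hE, hw2, ← hq]
  ring

end y

lemma sqF_continuous : Continuous sqF := by
  unfold sqF
  fun_prop

include hμ0 hμ1 in
lemma den_tendsto_one : Tendsto (fun y => μ*(1-μ)*sqF y) (𝓝[<] (1:ℝ)) (𝓝[>] 0) := by
  apply tendsto_nhdsWithin_of_tendsto_nhds_of_eventually_within
  · have hc : Continuous fun y : ℝ => μ*(1-μ)*sqF y := continuous_const.mul sqF_continuous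
    have := (hc.tendsto' 1 0 (by simp [sqF])).mono_left (nhdsWithin_le_nhds (s := Iio (1:ℝ)))
    exact this
  · filter_upwards [Ioo_mem_nhdsLT_of_mem (show (1:ℝ) ∈ Ioc (0:ℝ) 1 by constructor <;> norm_num)]
      with y hy
    have := sqF_pos hy
    have h4 : (0:ℝ) < 1 - μ := by linarith
    exact mul_pos (mul_pos hμ0 h4) this

include hμ0 hμ1 in
lemma den_tendsto_zero : Tendsto (fun y => μ*(1-μ)*sqF y) (𝓝[>] (0:ℝ)) (𝓝[>] 0) := by
  apply tendsto_nhdsWithin_of_tendsto_nhds_of_eventually_within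
  · have hc : Continuous fun y : ℝ => μ*(1-μ)*sqF y := continuous_const.mul sqF_continuous
    have := (hc.tendsto' 0 0 (by simp [sqF])).mono_left (nhdsWithin_le_nhds (s := Ioi (0:ℝ)))
    exact this
  · filter_upwards [Ioo_mem_nhdsGT_of_mem (show (0:ℝ) ∈ Ico (0:ℝ) 1 by constructor <;> norm_num)]
      with y hy
    have := sqF_pos hy
    have h4 : (0:ℝ) < 1 - μ := by linarith
    exact mul_pos (mul_pos hμ0 h4) this

include hμ0 hμ1 in
lemma uF_tendsto_one : Tendsto (uF μ) (𝓝[<] (1:ℝ)) atTop := by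
  have h : uF μ = fun y => (y - μ) * (μ*(1-μ)*sqF y)⁻¹ := funext fun y => div_eq_mul_inv _ _
  rw [h]
  refine Tendsto.pos_mul_atTop (show (0:ℝ) < 1 - μ by linarith) ?_
    (den_tendsto_one hμ0 hμ1).inv_tendsto_nhdsGT_zero
  exact ((continuous_id.sub continuous_const).tendsto' 1 (1-μ) rfl).mono_left nhdsWithin_le_nhds

include hμ0 hμ1 in
lemma uF_tendsto_zero : Tendsto (uF μ) (𝓝[>] (0:ℝ)) atBot := by
  have h : uF μ = fun y => (y - μ) * (μ*(1-μ)*sqF y)⁻¹ := funext fun y => div_eq_mul_inv _ _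
  rw [h]
  refine Tendsto.neg_mul_atTop (show -μ < 0 by linarith) ?_
    (den_tendsto_zero hμ0 hμ1).inv_tendsto_nhdsGT_zero
  exact ((continuous_id.sub continuous_const).tendsto' 0 (-μ) (by simp)).mono_left
    nhdsWithin_le_nhds

include hμ0 hμ1 in
lemma wF_tendsto_one : Tendsto (wF μ) (𝓝[<] (1:ℝ)) atTop := by
  have h : wF μ = fun y => (y + μ - 2*μ*y) * (μ*(1-μ)*sqF y)⁻¹ :=
    funext fun y => div_eq_mul_inv _ _
  rw [h]
  refine Tendsto.pos_mul_atTop (show (0:ℝ) < 1 - μ by linarith) ?_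
    (den_tendsto_one hμ0 hμ1).inv_tendsto_nhdsGT_zero
  have hc : Continuous fun y : ℝ => y + μ - 2*μ*y := by fun_prop
  exact (hc.tendsto' 1 (1-μ) (by ring)).mono_left nhdsWithin_le_nhds

include hμ0 hμ1 in
lemma wF_tendsto_zero : Tendsto (wF μ) (𝓝[>] (0:ℝ)) atTop := by
  have h : wF μ = fun y => (y + μ - 2*μ*y) * (μ*(1-μ)*sqF y)⁻¹ :=
    funext fun y => div_eq_mul_inv _ _
  rw [h]
  refine Tendsto.pos_mul_atTop hμ0 ?_ (den_tendsto_zero hμ0 hμ1).inv_tendsto_nhdsGT_zero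
  have hc : Continuous fun y : ℝ => y + μ - 2*μ*y := by fun_prop
  exact (hc.tendsto' 0 μ (by ring)).mono_left nhdsWithin_le_nhds

include hμ0 hμ1 hσ2 in
lemma AF_tendsto_one : Tendsto (AF μ σ2) (𝓝[<] (1:ℝ))
    (𝓝 (σ2 * ((∫ t in Ioi (0:ℝ), phiF σ2 t) - 0)
      + (1 - 2*μ) * Real.exp (2/(μ*(1-μ)*σ2)) *
        (σ2 * 0 + (4/(μ*(1-μ)) - σ2) * (∫ t in Ioi (0:ℝ), phiF σ2 t)))) := by
  have hu := uF_tendsto_one hμ0 hμ1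
  have hw := wF_tendsto_one hμ0 hμ1
  have h1 : Tendsto (fun y => PhiF σ2 (uF μ y)) (𝓝[<] (1:ℝ))
      (𝓝 (∫ t in Ioi (0:ℝ), phiF σ2 t)) := (PhiF_tendsto_atTop hσ2).comp hu
  have h2 : Tendsto (fun y => uF μ y * phiF σ2 (uF μ y)) (𝓝[<] (1:ℝ)) (𝓝 0) :=
    (mul_phiF_tendsto_atTop hσ2).comp hu
  have h3 : Tendsto (fun y => wF μ y * phiF σ2 (wF μ y)) (𝓝[<] (1:ℝ)) (𝓝 0) :=
    (mul_phiF_tendsto_atTop hσ2).comp hw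
  have h4 : Tendsto (fun y => PhiF σ2 (wF μ y)) (𝓝[<] (1:ℝ))
      (𝓝 (∫ t in Ioi (0:ℝ), phiF σ2 t)) := (PhiF_tendsto_atTop hσ2).comp hw
  exact ((h1.sub h2).const_mul σ2).add
    (((h3.const_mul σ2).add (h4.const_mul (4/(μ*(1-μ)) - σ2))).const_mul
      ((1 - 2*μ) * Real.exp (2/(μ*(1-μ)*σ2))))

include hμ0 hμ1 hσ2 in
lemma AF_tendsto_zero : Tendsto (AF μ σ2) (𝓝[>] (0:ℝ))
    (𝓝 (σ2 * ((-∫ t in Iic (0:ℝ), phiF σ2 t) - 0)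
      + (1 - 2*μ) * Real.exp (2/(μ*(1-μ)*σ2)) *
        (σ2 * 0 + (4/(μ*(1-μ)) - σ2) * (∫ t in Ioi (0:ℝ), phiF σ2 t)))) := by
  have hu := uF_tendsto_zero hμ0 hμ1
  have hw := wF_tendsto_zero hμ0 hμ1
  have h1 : Tendsto (fun y => PhiF σ2 (uF μ y)) (𝓝[>] (0:ℝ))
      (𝓝 (-∫ t in Iic (0:ℝ), phiF σ2 t)) := (PhiF_tendsto_atBot hσ2).comp hu
  have h2 : Tendsto (fun y => uF μ y * phiF σ2 (uF μ y)) (𝓝[>] (0:ℝ)) (𝓝 0) :=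
    (mul_phiF_tendsto_atBot hσ2).comp hu
  have h3 : Tendsto (fun y => wF μ y * phiF σ2 (wF μ y)) (𝓝[>] (0:ℝ)) (𝓝 0) :=
    (mul_phiF_tendsto_atTop hσ2).comp hw
  have h4 : Tendsto (fun y => PhiF σ2 (wF μ y)) (𝓝[>] (0:ℝ))
      (𝓝 (∫ t in Ioi (0:ℝ), phiF σ2 t)) := (PhiF_tendsto_atTop hσ2).comp hw
  exact ((h1.sub h2).const_mul σ2).add
    (((h3.const_mul σ2).add (h4.const_mul (4/(μ*(1-μ)) - σ2))).const_mul
      ((1 - 2*μ) * Real.exp (2/(μ*(1-μ)*σ2))))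

end lemmas

/-- The expected unit deviance under the simplex distribution equals the
dispersion parameter σ². -/
theorem simplexPdf_expected_deviance (μ σ2 : ℝ) (hμ : μ ∈ Set.Ioo (0:ℝ) 1)
    (hσ2 : 0 < σ2) :
    ∫ y in (0:ℝ)..1, simplexDev y μ * simplexPdf y μ σ2 = σ2 := by
  obtain ⟨hμ0, hμ1⟩ := hμ
  have h4 : (0:ℝ) < 1 - μ := by linarith
  set f : ℝ → ℝ := fun y => simplexDev y μ * simplexPdf y μ σ2 with hf
  -- continuity on Ioo 0 1
  have hcont : ∀ y ∈ Ioo (0:ℝ) 1, ContinuousAt f y := by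
    intro y hy
    have hyy : (0:ℝ) < y*(1-y) := by nlinarith [hy.1, hy.2]
    have hden : y * (1-y) * μ^2 * (1-μ)^2 ≠ 0 :=
      ne_of_gt (mul_pos (mul_pos hyy (pow_pos hμ0 2)) (pow_pos h4 2))
    have hdev : ContinuousAt (fun y => simplexDev y μ) y := by
      unfold simplexDev
      exact ContinuousAt.div (by fun_prop) (by fun_prop) hden
    have hbne : 2*π*σ2*(y*(1-y))^3 ≠ 0 :=
      ne_of_gt (mul_pos (by positivity) (pow_pos hyy 3))
    have hbase : ContinuousAt (fun y : ℝ => 2*π*σ2*(y*(1-y))^3) y := by fun_prop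
    have hrpow : ContinuousAt (fun y : ℝ => (2*π*σ2*(y*(1-y))^3) ^ (-(1/2):ℝ)) y :=
      hbase.rpow_const (Or.inl hbne)
    have hexp : ContinuousAt (fun y => Real.exp (-(simplexDev y μ)/(2*σ2))) y :=
      Real.continuous_exp.continuousAt.comp ((hdev.neg).div_const (2*σ2))
    have hpdf : ContinuousAt (fun y => simplexPdf y μ σ2) y := by
      unfold simplexPdf
      exact hrpow.mul hexp
    exact hdev.mul hpdf
  -- nonnegativity on Ioo 0 1
  have hnn : ∀ y ∈ Ioo (0:ℝ) 1, 0 ≤ f y := by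
    intro y hy
    have hyy : (0:ℝ) < y*(1-y) := by nlinarith [hy.1, hy.2]
    apply mul_nonneg
    · unfold simplexDev
      exact div_nonneg (sq_nonneg _)
        (le_of_lt (mul_pos (mul_pos hyy (pow_pos hμ0 2)) (pow_pos h4 2)))
    · unfold simplexPdf
      exact mul_nonneg (Real.rpow_nonneg (by positivity) _) (Real.exp_pos _).le
  -- sequences
  set a : ℕ → ℝ := fun n => ((n:ℝ)+2)⁻¹ with ha
  set b : ℕ → ℝ := fun n => 1 - ((n:ℝ)+2)⁻¹ with hb
  have hmem : ∀ n : ℕ, a n ∈ Ioo (0:ℝ) 1 ∧ b n ∈ Ioo (0:ℝ) 1 ∧ a n ≤ b n := by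
    intro n
    have h2 : (0:ℝ) < (n:ℝ)+2 := by positivity
    have hle2 : ((n:ℝ)+2)⁻¹ ≤ 2⁻¹ := by
      apply inv_anti₀ (by norm_num)
      linarith [Nat.cast_nonneg (α := ℝ) n]
    have hpos : 0 < ((n:ℝ)+2)⁻¹ := inv_pos.2 h2
    simp only [ha, hb]
    refine ⟨⟨hpos, by linarith⟩, ⟨by linarith, by linarith⟩, by linarith⟩
  have hsub : ∀ n : ℕ, Icc (a n) (b n) ⊆ Ioo (0:ℝ) 1 := fun n =>
    Icc_subset_Ioo (hmem n).1.1 (hmem n).2.1.2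
  have hsubI : ∀ n : ℕ, Set.uIcc (a n) (b n) ⊆ Ioo (0:ℝ) 1 := by
    intro n
    rw [Set.uIcc_of_le (hmem n).2.2]
    exact hsub n
  -- FTC on compact subintervals
  have hFTC : ∀ n : ℕ, ∫ y in (a n)..(b n), f y = AF μ σ2 (b n) - AF μ σ2 (a n) := by
    intro n
    apply intervalIntegral.integral_eq_sub_of_hasDerivAt
    · exact fun y hy => AF_hasDeriv hμ0 hμ1 hσ2 (hsubI n hy)
    · have hco : ContinuousOn f (Set.uIcc (a n) (b n)) :=
        fun y hy => (hcont y (hsubI n hy)).continuousWithinAt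
      exact hco.intervalIntegrable
  -- sequence limits
  have hatop : Tendsto (fun n : ℕ => (n:ℝ)+2) atTop atTop :=
    tendsto_atTop_add_const_right _ 2 tendsto_natCast_atTop_atTop
  have ha0 : Tendsto a atTop (𝓝 0) := hatop.inv_tendsto_atTop
  have hb1 : Tendsto b atTop (𝓝 1) := by
    simpa using ha0.const_sub (1:ℝ)
  have hseq0 : Tendsto a atTop (𝓝[>] (0:ℝ)) :=
    tendsto_nhdsWithin_of_tendsto_nhds_of_eventually_within _ ha0
      (Eventually.of_forall fun n => (hmem n).1.1)
  have hseq1 : Tendsto b atTop (𝓝[<] (1:ℝ)) :=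
    tendsto_nhdsWithin_of_tendsto_nhds_of_eventually_within _ hb1
      (Eventually.of_forall fun n => (hmem n).2.1.2)
  -- limit of the FTC values
  have hTop := (AF_tendsto_one hμ0 hμ1 hσ2).comp hseq1
  have hBot := (AF_tendsto_zero hμ0 hμ1 hσ2).comp hseq0
  have hlim : Tendsto (fun n => ∫ y in (a n)..(b n), f y) atTop (𝓝 σ2) := by
    have hsubt := hTop.sub hBot
    have htot : (∫ t in Iic (0:ℝ), phiF σ2 t) + (∫ t in Ioi (0:ℝ), phiF σ2 t) = 1 := by
      rw [intervalIntegral.integral_Iic_add_Ioi ((phiF_integrable hσ2).integrableOn)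
        ((phiF_integrable hσ2).integrableOn)]
      exact phiF_total hσ2
    have hval : (σ2 * ((∫ t in Ioi (0:ℝ), phiF σ2 t) - 0)
      + (1 - 2*μ) * Real.exp (2/(μ*(1-μ)*σ2)) *
        (σ2 * 0 + (4/(μ*(1-μ)) - σ2) * (∫ t in Ioi (0:ℝ), phiF σ2 t)))
      - (σ2 * ((-∫ t in Iic (0:ℝ), phiF σ2 t) - 0)
      + (1 - 2*μ) * Real.exp (2/(μ*(1-μ)*σ2)) *
        (σ2 * 0 + (4/(μ*(1-μ)) - σ2) * (∫ t in Ioi (0:ℝ), phiF σ2 t))) = σ2 := by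
      linear_combination σ2 * htot
    rw [hval] at hsubt
    exact hsubt.congr fun n => (hFTC n).symm
  -- integrability on Ioc 0 1
  have hIocsub : ∀ n : ℕ, Ioc (a n) (b n) ⊆ Ioo (0:ℝ) 1 := fun n =>
    subset_trans Ioc_subset_Icc_self (hsub n)
  have hIoc : ∀ n : ℕ, IntegrableOn f (Ioc (a n) (b n)) := by
    intro n
    apply ContinuousOn.integrableOn_Icc (fun y hy => (hcont y (hsub n hy)).continuousWithinAt)
      |>.mono_set Ioc_subset_Icc_self
  have hnorm : ∀ n : ℕ, (∫ x in Ioc (a n) (b n), ‖f x‖) = ∫ y in (a n)..(b n), f y := by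
    intro n
    rw [intervalIntegral.integral_of_le (hmem n).2.2]
    apply setIntegral_congr_fun measurableSet_Ioc
    intro x hx
    exact Real.norm_of_nonneg (hnn x (hIocsub n hx))
  have hbound : ∀ᶠ n in atTop, (∫ x in Ioc (a n) (b n), ‖f x‖) ≤ σ2 + 1 := by
    filter_upwards [hlim.eventually (eventually_le_nhds (by linarith : σ2 < σ2 + 1))] with n hn
    rw [hnorm n]
    exact hn
  have hInt : IntegrableOn f (Ioc (0:ℝ) 1) :=
    integrableOn_Ioc_of_intervalIntegral_norm_bounded hIoc ha0 hb1 hbound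
  -- value of the integral
  have hcov : AECover (volume.restrict (Ioc (0:ℝ) 1)) atTop (fun n => Ioc (a n) (b n)) :=
    aecover_Ioc_of_Ioc ha0 hb1
  have hval2 := hcov.integral_tendsto_of_countably_generated hInt
  have heqn : ∀ n : ℕ, (∫ x in Ioc (a n) (b n), f x ∂(volume.restrict (Ioc (0:ℝ) 1)))
      = ∫ y in (a n)..(b n), f y := by
    intro n
    rw [Measure.restrict_restrict measurableSet_Ioc,
      inter_eq_left.2 (fun x hx => Ioo_subset_Ioc_self (hIocsub n hx)),
      intervalIntegral.integral_of_le (hmem n).2.2]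
  rw [intervalIntegral.integral_of_le (zero_le_one (α := ℝ))]
  exact tendsto_nhds_unique (hval2.congr heqn) hlim
end

section
/- For every μ ∈ (0,1) and every σ² > 0, the score with respect to μ has zero expectation under the simplex distribution: ∫₀¹ u(y,μ) · (y−μ) · p(y;μ,σ²) dy = 0. (This yields the off-diagonal blocks of Fisher's information being zero, i.e. the global orthogonality of the mean and dispersion parameters.) -/
open Real MeasureTheory

private lemma simplex_w_pos {μ : ℝ} (hμ0 : 0 < μ) (hμ1 : μ < 1) {y : ℝ}
    (hy0 : 0 ≤ y) (hy1 : y ≤ 1) : 0 < μ^2 + (1-2*μ)*y := by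
  nlinarith [sq_nonneg μ, sq_nonneg (1-μ), mul_nonneg (sq_nonneg μ) (sub_nonneg.2 hy1),
    mul_nonneg hy0 (sq_nonneg (1-μ)), mul_pos hμ0 (show (0:ℝ) < 1-μ by linarith)]

private lemma psi_hasDerivAt {μ x : ℝ} (hw : μ^2 + (1-2*μ)*x ≠ 0) :
    HasDerivAt (fun y : ℝ => μ^2*(1-y)/(μ^2+(1-2*μ)*y))
      (-(μ^2*(1-μ)^2)/(μ^2+(1-2*μ)*x)^2) x := by
  have h1 : HasDerivAt (fun y : ℝ => μ^2*(1-y)) (-μ^2) x := by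
    simpa using ((hasDerivAt_id x).const_sub 1).const_mul (μ^2)
  have h2 : HasDerivAt (fun y : ℝ => μ^2+(1-2*μ)*y) (1-2*μ) x := by
    simpa using ((hasDerivAt_id x).const_mul (1-2*μ)).const_add (μ^2)
  have := h1.div h2 hw
  refine this.congr_deriv ?_
  ring

private lemma psi_invol {μ y : ℝ} (hμ0 : 0 < μ) (hμ1 : μ < 1) (hy0 : 0 ≤ y) (hy1 : y ≤ 1) :
    μ^2*(1-(μ^2*(1-y)/(μ^2+(1-2*μ)*y)))/(μ^2+(1-2*μ)*(μ^2*(1-y)/(μ^2+(1-2*μ)*y))) = y := by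
  have hw : (0:ℝ) < μ^2 + (1-2*μ)*y := simplex_w_pos hμ0 hμ1 hy0 hy1
  have hμ : μ ≠ 0 := hμ0.ne'
  have h1μ : (1:ℝ) - μ ≠ 0 := by linarith
  have hwne' : μ ^ 2 + y * (1 - μ * 2) ≠ 0 := by convert hw.ne' using 1; ring
  have hwne'' : μ ^ 2 + (1 - μ * 2) * y ≠ 0 := by convert hw.ne' using 1; ring
  have e2 : 1 - μ^2*(1-y)/(μ^2+(1-2*μ)*y) = y*(1-μ)^2/(μ^2+(1-2*μ)*y) := by
    field_simp
    ring
  have e3 : μ^2+(1-2*μ)*(μ^2*(1-y)/(μ^2+(1-2*μ)*y)) = μ^2*(1-μ)^2/(μ^2+(1-2*μ)*y) := by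
    field_simp
    ring
  have hwne : μ ^ 2 + (1 - 2 * μ) * y ≠ 0 := hw.ne'
  rw [e2, e3]
  field_simp

/-- The quantity u(y,μ). -/
noncomputable def simplexU (y μ : ℝ) : ℝ :=
  (1 / (μ * (1 - μ))) * (simplexDev y μ + 1 / (μ^2 * (1 - μ)^2))

private lemma simplex_key {μ σ2 : ℝ} (hμ0 : 0 < μ) (hμ1 : μ < 1) (hσ2 : 0 < σ2)
    {y : ℝ} (hy0 : 0 < y) (hy1 : y < 1) :
    (-(μ^2*(1-μ)^2)/(μ^2+(1-2*μ)*y)^2) *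
      (simplexU (μ^2*(1-y)/(μ^2+(1-2*μ)*y)) μ *
        (μ^2*(1-y)/(μ^2+(1-2*μ)*y) - μ) *
        simplexPdf (μ^2*(1-y)/(μ^2+(1-2*μ)*y)) μ σ2)
    = simplexU y μ * (y - μ) * simplexPdf y μ σ2 := by
  have hw : (0:ℝ) < μ^2 + (1-2*μ)*y := simplex_w_pos hμ0 hμ1 hy0.le hy1.le
  have hwne : μ^2 + (1-2*μ)*y ≠ 0 := hw.ne'
  have hμ : μ ≠ 0 := hμ0.ne'
  have h1μ : (1:ℝ) - μ ≠ 0 := by linarith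
  have hμ1' : (0:ℝ) < 1 - μ := by linarith
  have hy : y ≠ 0 := hy0.ne'
  have h1y : (1:ℝ) - y ≠ 0 := by linarith
  have h1y' : (0:ℝ) < 1 - y := by linarith
  set w : ℝ := μ^2 + (1-2*μ)*y with hw_def
  set z : ℝ := μ^2*(1-y)/w with hz_def
  have hw' : μ ^ 2 + y * (1 - μ * 2) ≠ 0 := by convert hwne using 1; ring
  have hz1 : 1 - z = y*(1-μ)^2/w := by
    rw [hz_def, hw_def]
    field_simp
    ring
  have hzμ : z - μ = μ*(1-μ)*(μ-y)/w := by
    rw [hz_def, hw_def]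
    field_simp
    ring
  have hzz : z*(1-z) = μ^2*(1-μ)^2*(y*(1-y))/w^2 := by
    rw [hz1, hz_def, hw_def]
    field_simp
  have hdev : simplexDev z μ = simplexDev y μ := by
    unfold simplexDev
    rw [hzμ, hz1, hz_def, hw_def]
    field_simp
    ring
  have hU : simplexU z μ = simplexU y μ := by
    unfold simplexU
    rw [hdev]
  have hA : (0:ℝ) < 2*Real.pi*σ2*(y*(1-y))^3 :=
    mul_pos (mul_pos (mul_pos two_pos Real.pi_pos) hσ2)
      (pow_pos (mul_pos hy0 h1y') 3)
  have hc : (0:ℝ) < μ*(1-μ)/w := div_pos (mul_pos hμ0 hμ1') hw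
  have h6 : 2*Real.pi*σ2*(z*(1-z))^3
      = (2*Real.pi*σ2*(y*(1-y))^3) * ((μ*(1-μ)/w)^3)^2 := by
    rw [hzz]
    field_simp
  have hpow : ((2*Real.pi*σ2*(y*(1-y))^3) * ((μ*(1-μ)/w)^3)^2) ^ (-(1/2):ℝ)
      = (2*Real.pi*σ2*(y*(1-y))^3) ^ (-(1/2):ℝ) * ((μ*(1-μ)/w)^3)⁻¹ := by
    rw [Real.mul_rpow hA.le (by positivity)]
    congr 1
    rw [← Real.rpow_natCast ((μ*(1-μ)/w)^3) 2, ← Real.rpow_mul (by positivity)]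
    rw [show ((2:ℕ):ℝ) * (-(1/2):ℝ) = -1 by norm_num, Real.rpow_neg_one]
  have hpdf : simplexPdf z μ σ2 = ((μ*(1-μ)/w)^3)⁻¹ * simplexPdf y μ σ2 := by
    unfold simplexPdf
    rw [hdev, h6, hpow]
    ring
  rw [hU, hpdf, hzμ]
  have hwne3 : w ≠ 0 := hwne
  field_simp
  ring


private lemma simplex_h_contAt {μ σ2 : ℝ} (hμ0 : 0 < μ) (hμ1 : μ < 1) (hσ2 : 0 < σ2)
    {y : ℝ} (hy0 : 0 < y) (hy1 : y < 1) :
    ContinuousAt (fun t : ℝ => simplexU t μ * (t - μ) * simplexPdf t μ σ2) y := by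
  have hden : y * (1 - y) * μ^2 * (1 - μ)^2 ≠ 0 := by
    have : (0:ℝ) < y * (1 - y) * μ^2 * (1 - μ)^2 := by
      have h1 : (0:ℝ) < 1 - y := by linarith
      have h2 : (0:ℝ) < 1 - μ := by linarith
      positivity
    exact this.ne'
  have hdev : ContinuousAt (fun t : ℝ => simplexDev t μ) y := by
    unfold simplexDev
    exact ContinuousAt.div (by fun_prop) (by fun_prop) hden
  have hU : ContinuousAt (fun t : ℝ => simplexU t μ) y := by
    unfold simplexU
    exact continuousAt_const.mul (hdev.add continuousAt_const)
  have hbase : (0:ℝ) < 2 * Real.pi * σ2 * (y * (1 - y))^3 := by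
    have h1 : (0:ℝ) < 1 - y := by linarith
    have := Real.pi_pos
    positivity
  have hpdf : ContinuousAt (fun t : ℝ => simplexPdf t μ σ2) y := by
    unfold simplexPdf
    refine ContinuousAt.mul ?_ ?_
    · exact ContinuousAt.rpow_const (by fun_prop) (Or.inl hbase.ne')
    · exact (Real.continuous_exp.continuousAt).comp ((hdev.neg).div_const _)
  exact (hU.mul (by fun_prop)).mul hpdf

/-- The score with respect to μ has zero expectation under the simplex
distribution. -/
theorem simplexPdf_score_mean_zero (μ σ2 : ℝ) (hμ : μ ∈ Set.Ioo (0:ℝ) 1)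
    (hσ2 : 0 < σ2) :
    ∫ y in (0:ℝ)..1, simplexU y μ * (y - μ) * simplexPdf y μ σ2 = 0 := by
  obtain ⟨hμ0, hμ1⟩ := hμ
  set h : ℝ → ℝ := fun y => simplexU y μ * (y - μ) * simplexPdf y μ σ2 with hh
  by_cases hI : IntervalIntegrable h volume 0 1
  swap
  · exact intervalIntegral.integral_undef hI
  have hcont : ContinuousOn h (Set.Ioo 0 1) := fun x hx =>
    (simplex_h_contAt hμ0 hμ1 hσ2 hx.1 hx.2).continuousWithinAt
  set ψ : ℝ → ℝ := fun t => μ^2*(1-t)/(μ^2+(1-2*μ)*t) with hψ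
  set D : ℝ → ℝ := fun t => -(μ^2*(1-μ)^2)/(μ^2+(1-2*μ)*t)^2 with hD
  -- key cancellation on symmetric intervals
  have key : ∀ a ∈ Set.Ioc (0:ℝ) μ, ∫ y in a..ψ a, h y = 0 := by
    intro a ha
    obtain ⟨ha0, haμ⟩ := ha
    have ha1 : a ≤ 1 := le_trans haμ hμ1.le
    have haw : (0:ℝ) < μ^2 + (1-2*μ)*a := simplex_w_pos hμ0 hμ1 ha0.le ha1
    have hψa1 : ψ a < 1 := by
      rw [hψ]
      rw [div_lt_one haw]
      nlinarith [mul_pos ha0 (pow_pos (show (0:ℝ) < 1-μ by linarith) 2)]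
    have hψa0 : 0 < ψ a := by
      rw [hψ]
      have : (0:ℝ) < μ^2*(1-a) := mul_pos (pow_pos hμ0 2) (by linarith)
      positivity
    have hμψ : μ ≤ ψ a := by
      rw [hψ]
      rw [le_div_iff₀ haw]
      nlinarith [mul_nonneg (mul_nonneg hμ0.le (show (0:ℝ) ≤ 1-μ by linarith)) (show (0:ℝ) ≤ μ-a by linarith)]
    have haψ : a ≤ ψ a := le_trans haμ hμψ
    have hsub : ∀ x ∈ Set.uIcc a (ψ a), x ∈ Set.Ioo (0:ℝ) 1 := by
      intro x hx
      rw [Set.uIcc_of_le haψ] at hx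
      exact ⟨lt_of_lt_of_le ha0 hx.1, lt_of_le_of_lt hx.2 hψa1⟩
    have hderiv : ∀ x ∈ Set.uIcc a (ψ a), HasDerivAt ψ (D x) x := by
      intro x hx
      obtain ⟨hx0, hx1⟩ := hsub x hx
      exact psi_hasDerivAt (simplex_w_pos hμ0 hμ1 hx0.le hx1.le).ne'
    have hDcont : ContinuousOn D (Set.uIcc a (ψ a)) := by
      apply ContinuousOn.div continuousOn_const (by fun_prop)
      intro x hx
      obtain ⟨hx0, hx1⟩ := hsub x hx
      exact pow_ne_zero 2 (simplex_w_pos hμ0 hμ1 hx0.le hx1.le).ne'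
    have himg : ContinuousOn h (ψ '' Set.uIcc a (ψ a)) := by
      apply hcont.mono
      rintro _ ⟨x, hx, rfl⟩
      obtain ⟨hx0, hx1⟩ := hsub x hx
      have hxw : (0:ℝ) < μ^2 + (1-2*μ)*x := simplex_w_pos hμ0 hμ1 hx0.le hx1.le
      constructor
      · rw [hψ]
        have : (0:ℝ) < μ^2*(1-x) := mul_pos (pow_pos hμ0 2) (by linarith)
        positivity
      · rw [hψ]
        rw [div_lt_one hxw]
        nlinarith [mul_pos hx0 (pow_pos (show (0:ℝ) < 1-μ by linarith) 2)]
    have hsubst := intervalIntegral.integral_comp_smul_deriv' hderiv hDcont himg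
    have hinv : ψ (ψ a) = a := by
      rw [hψ]
      exact psi_invol hμ0 hμ1 ha0.le ha1
    rw [hinv] at hsubst
    have hLHS : ∫ x in a..ψ a, D x • (h ∘ ψ) x = ∫ x in a..ψ a, h x := by
      apply intervalIntegral.integral_congr
      intro x hx
      obtain ⟨hx0, hx1⟩ := hsub x hx
      simp only [smul_eq_mul, Function.comp_apply, hD, hψ, hh]
      exact simplex_key hμ0 hμ1 hσ2 hx0 hx1
    have hsym : ∫ x in ψ a..a, h x = -∫ x in a..ψ a, h x :=
      intervalIntegral.integral_symm a (ψ a)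
    rw [hLHS, hsym] at hsubst
    linarith
  -- primitive and limits
  set G : ℝ → ℝ := fun t => ∫ x in (0:ℝ)..t, h x with hG
  have hGcont : ContinuousOn G (Set.Icc 0 1) := by
    have h01 : (0:ℝ) ∈ Set.uIcc (0:ℝ) 1 := Set.left_mem_uIcc
    have := intervalIntegral.continuousOn_primitive_interval' hI h01
    simpa [Set.uIcc_of_le (by norm_num : (0:ℝ) ≤ 1)] using this
  have hGa : ∀ a ∈ Set.Ioc (0:ℝ) μ, G (ψ a) = G a := by
    intro a ha
    obtain ⟨ha0, haμ⟩ := ha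
    have ha1 : a ≤ 1 := le_trans haμ hμ1.le
    have haw : (0:ℝ) < μ^2 + (1-2*μ)*a := simplex_w_pos hμ0 hμ1 ha0.le ha1
    have hψa1 : ψ a ≤ 1 := by
      rw [hψ]; rw [div_le_one haw]
      nlinarith [mul_pos ha0 (pow_pos (show (0:ℝ) < 1-μ by linarith) 2)]
    have hψa0 : 0 ≤ ψ a := by
      rw [hψ]
      have h1 : (0:ℝ) ≤ μ^2*(1-a) := mul_nonneg (sq_nonneg μ) (by linarith)
      positivity
    have h1 : IntervalIntegrable h volume 0 a := by
      apply hI.mono_set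
      rw [Set.uIcc_of_le ha0.le, Set.uIcc_of_le (by norm_num : (0:ℝ) ≤ 1)]
      exact Set.Icc_subset_Icc le_rfl ha1
    have h2 : IntervalIntegrable h volume a (ψ a) := by
      apply hI.mono_set
      rw [Set.uIcc_of_le (by norm_num : (0:ℝ) ≤ 1)]
      intro x hx
      rcases Set.mem_uIcc.1 hx with h | h
      · exact ⟨le_trans ha0.le h.1, le_trans h.2 hψa1⟩
      · exact ⟨le_trans hψa0 h.1, le_trans h.2 ha1⟩
    have hadd := intervalIntegral.integral_add_adjacent_intervals h1 h2
    have hk := key a ⟨ha0, haμ⟩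
    simp only [hG]
    rw [← hadd, hk, add_zero]
  have hψcont : Filter.Tendsto ψ (nhdsWithin 0 (Set.Ioi 0)) (nhds 1) := by
    have hca : ContinuousAt ψ 0 := by
      rw [hψ]
      apply ContinuousAt.div (by fun_prop) (by fun_prop)
      simp
      positivity
    have hψ0 : ψ 0 = 1 := by
      rw [hψ]
      field_simp
      ring
    have := hca.tendsto
    rw [hψ0] at this
    exact this.mono_left nhdsWithin_le_nhds
  have hev : ∀ᶠ a in nhdsWithin 0 (Set.Ioi 0), a ∈ Set.Ioc (0:ℝ) μ := by
    have : Set.Ioc (0:ℝ) μ ∈ nhdsWithin 0 (Set.Ioi 0) :=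
      Ioc_mem_nhdsGT_of_mem ⟨le_refl 0, hμ0⟩
    exact this
  have l1 : Filter.Tendsto (fun a => G (ψ a)) (nhdsWithin 0 (Set.Ioi 0)) (nhds (G 1)) := by
    have hG1 : ContinuousWithinAt G (Set.Icc 0 1) 1 :=
      hGcont 1 (by norm_num)
    apply hG1.tendsto.comp
    apply tendsto_nhdsWithin_of_tendsto_nhds_of_eventually_within _ hψcont
    filter_upwards [hev] with a ha
    have ha1 : a ≤ 1 := le_trans ha.2 hμ1.le
    have haw : (0:ℝ) < μ^2 + (1-2*μ)*a := simplex_w_pos hμ0 hμ1 ha.1.le ha1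
    constructor
    · rw [hψ]
      have h1 : (0:ℝ) ≤ μ^2*(1-a) := mul_nonneg (sq_nonneg μ) (by linarith)
      positivity
    · rw [hψ]; rw [div_le_one haw]
      nlinarith [mul_pos ha.1 (pow_pos (show (0:ℝ) < 1-μ by linarith) 2)]
  have l2 : Filter.Tendsto G (nhdsWithin 0 (Set.Ioi 0)) (nhds (G 0)) := by
    have hG0 : ContinuousWithinAt G (Set.Icc 0 1) 0 :=
      hGcont 0 (by norm_num)
    have hid : Filter.Tendsto (fun a : ℝ => a) (nhdsWithin 0 (Set.Ioi 0))
        (nhdsWithin 0 (Set.Icc 0 1)) := by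
      apply tendsto_nhdsWithin_of_tendsto_nhds_of_eventually_within _
        (Filter.tendsto_id.mono_left nhdsWithin_le_nhds)
      filter_upwards [hev] with a ha
      exact ⟨ha.1.le, le_trans ha.2 hμ1.le⟩
    exact hG0.tendsto.comp hid
  have heq : (fun a => G (ψ a)) =ᶠ[nhdsWithin 0 (Set.Ioi 0)] G := by
    filter_upwards [hev] with a ha
    exact hGa a ha
  have huniq : G 1 = G 0 := tendsto_nhds_unique (l1.congr' heq) l2
  have hG0 : G 0 = 0 := intervalIntegral.integral_same
  show G 1 = 0
  rw [huniq, hG0]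
end
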